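/- arXiv:2406.17622 — 3 statements merged into one kernel-verified Lean document; each statement's English description precedes it below -/
import Mathlib

section
/- Let d ≥ 1 and let P be a probability measure on the space Ω = [0,∞)^{ℤ^d×ℤ^d} of environments (with the product σ-algebra) such that: P is stationary and ergodic under the shifts τ_x; P-almost surely, ω_{x,y} = ω_{y,x} > 0 whenever |x−y| = 1, ω_{x,y} = 0 whenever |x−y| > 1 and x ≠ y, and π_ω(x) := ∑_{z∈ℤ^d} ω_{x,z} < ∞ for all x; and E_P[π_ω(0)] < ∞. Let R be the Markov kernel on Ω under which, from ω, one jumps to τ_z ω with probability ω_{0,z}/π_ω(0), and define Q by dQ/dP = π_ω(0)/E_P[π_ω(0)]. Then the environment chain with kernel R is ergodic under Q: every bounded measurable f : Ω → ℝ satisfying Rf = f Q-almost everywhere is Q-almost everywhere constant. -/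
open MeasureTheory
open scoped ENNReal NNReal Classical

noncomputable section

/-- The lattice `ℤ^d`. -/
abbrev Zd (d : ℕ) := Fin d → ℤ

/-- Euclidean norm of a lattice point. -/
def znorm {d : ℕ} (x : Zd d) : ℝ := Real.sqrt (∑ i, ((x i : ℝ)) ^ 2)

/-- The space of environments `[0,∞)^{ℤ^d × ℤ^d}` (with the product σ-algebra). -/
abbrev EnvC (d : ℕ) := (Zd d × Zd d) → ℝ≥0

/-- `π_ω(x) = ∑_z ω_{x,z}`, as an extended real. -/
def piC {d : ℕ} (ω : EnvC d) (x : Zd d) : ℝ≥0∞ := ∑' z : Zd d, (ω (x, z) : ℝ≥0∞)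

/-- Shift of the environment by `z ∈ ℤ^d` : `(τ_z ω)_{x,y} = ω_{x+z,y+z}`. -/
def shiftE {d : ℕ} (z : Zd d) (ω : EnvC d) : EnvC d := fun q => ω (q.1 + z, q.2 + z)

/-- Action `(Rf)(ω) = ∑_z (ω_{0,z}/π_ω(0)) f(τ_z ω)` of the environment kernel on functions. -/
def Rop {d : ℕ} (f : EnvC d → ℝ) (ω : EnvC d) : ℝ :=
  ∑' z : Zd d, ((ω (0, z) : ℝ) / (piC ω 0).toReal) * f (shiftE z ω)

/-! ### Auxiliary lemmas -/

lemma shiftE_shiftE {d : ℕ} (x y : Zd d) (ω : EnvC d) :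
    shiftE x (shiftE y ω) = shiftE (y + x) ω := by
  funext q
  simp [shiftE, add_assoc, add_comm x y]

lemma shiftE_zero {d : ℕ} (ω : EnvC d) : shiftE (0 : Zd d) ω = ω := by
  funext q; simp [shiftE]

lemma measurable_shiftE {d : ℕ} (z : Zd d) : Measurable (shiftE (d := d) z) := by
  apply measurable_pi_lambda
  intro q
  exact measurable_pi_apply _

lemma coord_meas {d : ℕ} (a b : Zd d) : Measurable (fun ω : EnvC d => ((ω (a,b) : ℝ≥0∞))) :=
  (measurable_pi_apply (a, b)).coe_nnreal_ennreal

lemma measurable_piC {d : ℕ} : Measurable (fun ω : EnvC d => piC ω 0) := by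
  apply Measurable.ennreal_tsum
  intro z
  exact coord_meas 0 z

lemma znorm_neg {d : ℕ} (x : Zd d) : znorm (-x) = znorm x := by
  simp [znorm]

lemma one_le_znorm {d : ℕ} {x : Zd d} (hx : x ≠ 0) : 1 ≤ znorm x := by
  obtain ⟨i, hi⟩ : ∃ i, x i ≠ 0 := by
    by_contra h
    push_neg at h
    exact hx (funext h)
  have h1 : (1 : ℝ) ≤ ((x i : ℝ)) ^ 2 := by
    have : (1 : ℤ) ≤ (x i) ^ 2 := by
      rcases lt_or_gt_of_ne hi with h | h <;> nlinarith
    exact_mod_cast this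
  have h2 : (1 : ℝ) ≤ ∑ j, ((x j : ℝ)) ^ 2 :=
    le_trans h1 (Finset.single_le_sum (f := fun j => ((x j : ℝ))^2)
      (fun j _ => sq_nonneg _) (Finset.mem_univ i))
  calc (1:ℝ) = Real.sqrt 1 := by simp
  _ ≤ znorm x := Real.sqrt_le_sqrt h2

lemma znorm_cases {d : ℕ} (x : Zd d) : x = 0 ∨ znorm x = 1 ∨ 1 < znorm x := by
  by_cases hx : x = 0
  · exact Or.inl hx
  · rcases eq_or_lt_of_le (one_le_znorm hx) with h | h
    · exact Or.inr (Or.inl h.symm)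
    · exact Or.inr (Or.inr h)

/-- unit basis vector -/
def unitE (d : ℕ) (hd : 1 ≤ d) : Zd d := fun i => if i = ⟨0, hd⟩ then 1 else 0

lemma znorm_unitE (d : ℕ) (hd : 1 ≤ d) : znorm (unitE d hd) = 1 := by
  have : ∑ i, ((unitE d hd i : ℝ)) ^ 2 = 1 := by
    rw [Finset.sum_eq_single ⟨0, hd⟩]
    · simp [unitE]
    · intro j _ hj; simp [unitE, hj]
    · simp
  simp [znorm, this]

/-- Goodness of an environment. -/
def Good {d : ℕ} (ω : EnvC d) : Prop :=
  (∀ x y : Zd d, (znorm (x - y) = 1 → ω (x, y) = ω (y, x) ∧ 0 < ω (x, y)) ∧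
    (1 < znorm (x - y) → ω (x, y) = 0)) ∧ ∀ x : Zd d, piC ω x < ∞

lemma Good.symm {d : ℕ} {ω : EnvC d} (h : Good ω) (a b : Zd d) : ω (a, b) = ω (b, a) := by
  rcases znorm_cases (a - b) with h0 | h1 | h2
  · have : a = b := sub_eq_zero.mp h0
    rw [this]
  · exact ((h.1 a b).1 h1).1
  · have hba : 1 < znorm (b - a) := by
      rw [show b - a = -(a - b) by ring, znorm_neg]; exact h2
    rw [(h.1 a b).2 h2, (h.1 b a).2 hba]

lemma Good.pi_pos {d : ℕ} (hd : 1 ≤ d) {ω : EnvC d} (h : Good ω) : 0 < piC ω 0 := by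
  have h1 : znorm ((0 : Zd d) - unitE d hd) = 1 := by
    rw [zero_sub, znorm_neg]; exact znorm_unitE d hd
  have hpos : 0 < ω (0, unitE d hd) := ((h.1 0 (unitE d hd)).1 h1).2
  have hle : (↑(ω (0, unitE d hd)) : ℝ≥0∞) ≤ piC ω 0 := ENNReal.le_tsum _
  refine lt_of_lt_of_le ?_ hle
  exact_mod_cast hpos

lemma Good.pi_ne_top {d : ℕ} {ω : EnvC d} (h : Good ω) : piC ω 0 ≠ ∞ := (h.2 0).ne

/-- Stationarity + symmetry gives the key integral identity. -/
lemma invariance {d : ℕ} (P : Measure (EnvC d))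
    (hstat : ∀ x : Zd d, P.map (shiftE x) = P)
    (hsymm : ∀ᵐ ω ∂P, ∀ a b : Zd d, ω (a, b) = ω (b, a))
    (g : EnvC d → ℝ≥0∞) (hg : Measurable g) :
    ∫⁻ ω, ∑' z : Zd d, (ω (0, z) : ℝ≥0∞) * g (shiftE z ω) ∂P = ∫⁻ ω, piC ω 0 * g ω ∂P := by
  have hmz : ∀ z : Zd d, Measurable (fun ω : EnvC d => (ω (0, z) : ℝ≥0∞) * g (shiftE z ω)) :=
    fun z => (coord_meas 0 z).mul (hg.comp (measurable_shiftE z))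
  rw [lintegral_tsum (fun z => (hmz z).aemeasurable)]
  have key : ∀ z : Zd d, ∫⁻ ω, (ω (0, z) : ℝ≥0∞) * g (shiftE z ω) ∂P
      = ∫⁻ ω, (ω (0, -z) : ℝ≥0∞) * g ω ∂P := by
    intro z
    have hmh : Measurable (fun ω : EnvC d => (ω (-z, 0) : ℝ≥0∞) * g ω) :=
      (coord_meas (-z) 0).mul hg
    have h1 : ∫⁻ ω, (ω (-z, 0) : ℝ≥0∞) * g ω ∂P
        = ∫⁻ ω, (ω (0, z) : ℝ≥0∞) * g (shiftE z ω) ∂P := by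
      conv_lhs => rw [← hstat z]
      rw [lintegral_map hmh (measurable_shiftE z)]
      congr 1
      funext ω
      simp [shiftE]
    rw [← h1]
    apply lintegral_congr_ae
    filter_upwards [hsymm] with ω hω
    rw [hω (-z) 0]
  calc ∑' z : Zd d, ∫⁻ ω, (ω (0, z) : ℝ≥0∞) * g (shiftE z ω) ∂P
      = ∑' z : Zd d, ∫⁻ ω, (ω (0, -z) : ℝ≥0∞) * g ω ∂P := tsum_congr key
    _ = ∫⁻ ω, ∑' z : Zd d, (ω (0, -z) : ℝ≥0∞) * g ω ∂P := by
        rw [lintegral_tsum (f := fun z ω => (ω (0, -z) : ℝ≥0∞) * g ω) (fun z => ((coord_meas 0 (-z)).mul hg).aemeasurable)]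
    _ = ∫⁻ ω, piC ω 0 * g ω ∂P := by
        apply lintegral_congr
        intro ω
        rw [ENNReal.tsum_mul_right]
        congr 1
        exact (Equiv.neg (Zd d)).tsum_eq (fun z => (ω (0, z) : ℝ≥0∞))

section pointwise
variable {d : ℕ} {ω : EnvC d} {f : EnvC d → ℝ} {M : ℝ}

lemma sum_coe_eq (hπt : piC ω 0 ≠ ∞) :
    ∑' z : Zd d, ((ω (0, z) : ℝ)) = (piC ω 0).toReal := by
  rw [piC, ENNReal.tsum_toReal_eq (fun z => ENNReal.coe_ne_top)]
  simp

lemma summable_coe (hπt : piC ω 0 ≠ ∞) : Summable (fun z : Zd d => ((ω (0, z) : ℝ))) := by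
  have := ENNReal.summable_toReal (f := fun z : Zd d => ((ω (0, z) : ℝ≥0∞))) hπt
  simpa using this

lemma summable_p (hπt : piC ω 0 ≠ ∞) :
    Summable (fun z : Zd d => ((ω (0, z) : ℝ)) / (piC ω 0).toReal) :=
  (summable_coe hπt).div_const _

lemma tsum_p_eq_one (hπ0 : piC ω 0 ≠ 0) (hπt : piC ω 0 ≠ ∞) :
    ∑' z : Zd d, ((ω (0, z) : ℝ)) / (piC ω 0).toReal = 1 := by
  rw [tsum_div_const, sum_coe_eq hπt, div_self (ENNReal.toReal_ne_zero.mpr ⟨hπ0, hπt⟩)]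

lemma pointwise_key (hπ0 : piC ω 0 ≠ 0) (hπt : piC ω 0 ≠ ∞)
    (hb : ∀ ω, |f ω| ≤ M) (hR : Rop f ω = f ω) :
    (∑' z : Zd d, ((ω (0, z) : ℝ≥0∞) / piC ω 0) *
        ENNReal.ofReal ((f (shiftE z ω) - f ω)^2))
      = (∑' z : Zd d, ((ω (0, z) : ℝ≥0∞) / piC ω 0) * ENNReal.ofReal (f (shiftE z ω)^2))
        - ENNReal.ofReal (f ω ^ 2) ∧
    ENNReal.ofReal (f ω ^ 2) ≤
      ∑' z : Zd d, ((ω (0, z) : ℝ≥0∞) / piC ω 0) * ENNReal.ofReal (f (shiftE z ω)^2) := by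
  set p : Zd d → ℝ := fun z => ((ω (0, z) : ℝ)) / (piC ω 0).toReal with hpdef
  set a : Zd d → ℝ := fun z => f (shiftE z ω) with hadef
  set b : ℝ := f ω with hbdef
  have hpnn : ∀ z, 0 ≤ p z := fun z => div_nonneg (ω (0,z)).coe_nonneg ENNReal.toReal_nonneg
  have hp : Summable p := summable_p hπt
  have hpsum : ∑' z, p z = 1 := tsum_p_eq_one hπ0 hπt
  have hM : 0 ≤ M := le_trans (abs_nonneg _) (hb ω)
  have haM : ∀ z, |a z| ≤ M := fun z => hb _
  have ha2 : Summable (fun z => p z * (a z)^2) := by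
    apply Summable.of_nonneg_of_le (fun z => mul_nonneg (hpnn z) (sq_nonneg _))
      (fun z => ?_) (hp.mul_right (M^2))
    have : (a z)^2 ≤ M^2 := by
      rw [← sq_abs]; exact pow_le_pow_left₀ (abs_nonneg _) (haM z) 2
    exact mul_le_mul_of_nonneg_left this (hpnn z)
  have ha1 : Summable (fun z => p z * a z) := by
    apply Summable.of_abs
    apply Summable.of_nonneg_of_le (fun z => abs_nonneg _) (fun z => ?_) (hp.mul_right M)
    rw [abs_mul, abs_of_nonneg (hpnn z)]
    exact mul_le_mul_of_nonneg_left (haM z) (hpnn z)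
  have hd2 : Summable (fun z => p z * (a z - b)^2) := by
    have : (fun z => p z * (a z - b)^2)
        = fun z => p z * a z^2 - 2*b*(p z * a z) + b^2 * p z := by
      funext z; ring
    rw [this]
    exact ((ha2.sub ((ha1.mul_left (2*b))))).add (hp.mul_left (b^2))
  have hT1 : ∑' z, p z * a z = b := hR
  have hreal : ∑' z, p z * (a z - b)^2 = (∑' z, p z * (a z)^2) - b^2 := by
    have e1 : (fun z => p z * (a z - b)^2)
        = fun z => (p z * a z^2 - 2*b*(p z * a z)) + b^2 * p z := by
      funext z; ring
    rw [e1, Summable.tsum_add (ha2.sub (ha1.mul_left (2*b))) (hp.mul_left (b^2)),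
      Summable.tsum_sub ha2 (ha1.mul_left (2*b)), tsum_mul_left, tsum_mul_left, hT1, hpsum]
    ring
  have hb2le : b^2 ≤ ∑' z, p z * (a z)^2 := by
    have h0 : 0 ≤ ∑' z, p z * (a z - b)^2 :=
      tsum_nonneg (fun z => mul_nonneg (hpnn z) (sq_nonneg _))
    linarith [hreal ▸ h0]
  have hcoef : ∀ z : Zd d, ((ω (0, z) : ℝ≥0∞) / piC ω 0) = ENNReal.ofReal (p z) := by
    intro z
    have hne : ((ω (0, z) : ℝ≥0∞) / piC ω 0) ≠ ∞ := by
      intro h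
      rw [ENNReal.div_eq_top] at h
      rcases h with ⟨_, h2⟩ | ⟨h1, _⟩
      · exact hπ0 h2
      · exact ENNReal.coe_ne_top h1
    rw [← ENNReal.ofReal_toReal hne, ENNReal.toReal_div]
    simp [hpdef]
  have hconv : ∀ (c : Zd d → ℝ), (∀ z, 0 ≤ c z) → Summable (fun z => p z * c z) →
      (∑' z : Zd d, ((ω (0, z) : ℝ≥0∞) / piC ω 0) * ENNReal.ofReal (c z))
        = ENNReal.ofReal (∑' z, p z * c z) := by
    intro c hc hsc
    rw [ENNReal.ofReal_tsum_of_nonneg (fun z => mul_nonneg (hpnn z) (hc z)) hsc]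
    apply tsum_congr
    intro z
    rw [hcoef z, ← ENNReal.ofReal_mul (hpnn z)]
  have hE2 : (∑' z : Zd d, ((ω (0, z) : ℝ≥0∞) / piC ω 0) * ENNReal.ofReal (a z^2))
      = ENNReal.ofReal (∑' z, p z * (a z)^2) := hconv _ (fun z => sq_nonneg _) ha2
  have hED : (∑' z : Zd d, ((ω (0, z) : ℝ≥0∞) / piC ω 0) * ENNReal.ofReal ((a z - b)^2))
      = ENNReal.ofReal (∑' z, p z * (a z - b)^2) := hconv _ (fun z => sq_nonneg _) hd2
  constructor
  · rw [hED, hE2, hreal, ENNReal.ofReal_sub _ (sq_nonneg b)]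
  · rw [hE2]
    exact ENNReal.ofReal_le_ofReal hb2le

end pointwise

lemma all_shifts {d : ℕ} (f : EnvC d → ℝ) (ω : EnvC d)
    (h : ∀ y z : Zd d, znorm z = 1 → f (shiftE z (shiftE y ω)) = f (shiftE y ω)) :
    ∀ x : Zd d, f (shiftE x ω) = f ω := by
  suffices H : ∀ n : ℕ, ∀ x : Zd d, (∑ i, (x i).natAbs) = n → f (shiftE x ω) = f ω by
    intro x; exact H _ x rfl
  intro n
  induction n using Nat.strong_induction_on with
  | _ n ih =>
    intro x hx
    by_cases hx0 : x = 0
    · rw [hx0, shiftE_zero]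
    · obtain ⟨i, hi⟩ := Function.ne_iff.mp hx0
      have hi' : x i ≠ 0 := by simpa using hi
      set s : ℤ := if 0 < x i then 1 else -1 with hs
      set u : Zd d := fun j => if j = i then s else 0 with hu
      have hs1 : s = 1 ∨ s = -1 := by rw [hs]; split_ifs <;> simp
      have hun : znorm u = 1 := by
        have hsum : ∑ j, ((u j : ℝ))^2 = 1 := by
          rw [Finset.sum_eq_single i]
          · rcases hs1 with h' | h' <;> simp [hu, h']
          · intro j _ hj; simp [hu, hj]
          · simp
        simp [znorm, hsum]
      set y : Zd d := x - u with hy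
      have hyu : y + u = x := sub_add_cancel x u
      have hcnt : (∑ j, (y j).natAbs) < n := by
        rw [← hx]
        apply Finset.sum_lt_sum
        · intro j _
          by_cases hj : j = i
          · subst hj
            simp only [hy, Pi.sub_apply, hu, if_pos rfl]
            rw [hs]; split_ifs <;> omega
          · simp [hy, hu, hj]
        · refine ⟨i, Finset.mem_univ i, ?_⟩
          simp only [hy, Pi.sub_apply, hu, if_pos rfl]
          rw [hs]; split_ifs with h' <;> omega
      have step : f (shiftE x ω) = f (shiftE y ω) := by
        rw [← hyu, ← shiftE_shiftE]
        exact h y u hun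
      rw [step]
      exact ih _ hcnt y rfl

lemma const_of_allinv {d : ℕ} (P : Measure (EnvC d)) [IsProbabilityMeasure P]
    (herg : ∀ A : Set (EnvC d), MeasurableSet A → (∀ x : Zd d, shiftE x ⁻¹' A = A) →
      P A = 0 ∨ P A = 1)
    {f : EnvC d → ℝ} (hf : Measurable f) {M : ℝ} (hM : ∀ ω, |f ω| ≤ M)
    (hinv : ∀ᵐ ω ∂P, ∀ x : Zd d, f (shiftE x ω) = f ω) :
    ∃ c : ℝ, ∀ᵐ ω ∂P, f ω = c := by
  set A : ℝ → Set (EnvC d) := fun t => f ⁻¹' Set.Iio t with hA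
  have hAm : ∀ t, MeasurableSet (A t) := fun t => hf measurableSet_Iio
  have hA01 : ∀ t, P (A t) = 0 ∨ P (A t) = 1 := by
    intro t
    set U : Set (EnvC d) := ⋃ y : Zd d, shiftE y ⁻¹' A t with hU
    have hUm : MeasurableSet U :=
      MeasurableSet.iUnion fun y => (measurable_shiftE y) (hAm t)
    have hUinv : ∀ x : Zd d, shiftE x ⁻¹' U = U := by
      intro x
      ext ω
      simp only [hU, Set.mem_iUnion, Set.mem_preimage]
      constructor
      · rintro ⟨y, hy⟩
        exact ⟨x + y, by rwa [← shiftE_shiftE]⟩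
      · rintro ⟨y, hy⟩
        refine ⟨y - x, ?_⟩
        rw [shiftE_shiftE, add_sub_cancel]
        exact hy
    have hae : A t =ᵐ[P] U := by
      rw [Filter.eventuallyEq_set]
      filter_upwards [hinv] with ω hω
      constructor
      · intro h
        exact Set.mem_iUnion.mpr ⟨0, by simpa [Set.mem_preimage, shiftE_zero] using h⟩
      · intro h
        obtain ⟨y, hy⟩ := Set.mem_iUnion.mp h
        simp only [Set.mem_preimage, hA, Set.mem_Iio] at hy ⊢
        rwa [hω y] at hy
    rw [measure_congr hae]
    exact herg U hUm hUinv
  have hMnn : 0 ≤ M := le_trans (abs_nonneg _) (hM (fun _ => 0))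
  set S : Set ℝ := {t | P (A t) = 1} with hS
  have hSne : S.Nonempty := by
    refine ⟨M + 1, ?_⟩
    have : A (M + 1) = Set.univ := by
      ext ω
      simp only [hA, Set.mem_preimage, Set.mem_Iio, Set.mem_univ, iff_true]
      have := (abs_le.mp (hM ω)).2
      linarith
    simp [hS, this]
  have hSbdd : BddBelow S := by
    refine ⟨-M, fun t ht => ?_⟩
    by_contra hlt
    push_neg at hlt
    have hempty : A t = ∅ := by
      ext ω
      simp only [hA, Set.mem_preimage, Set.mem_Iio, Set.mem_empty_iff_false, iff_false, not_lt]
      have := (abs_le.mp (hM ω)).1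
      linarith
    have : P (A t) = 0 := by rw [hempty]; exact measure_empty
    rw [hS] at ht
    simp only [Set.mem_setOf_eq, this] at ht
    exact zero_ne_one ht
  set c : ℝ := sInf S with hc
  have claim1 : P (A c) = 0 := by
    set B : ℚ → Set (EnvC d) := fun q => if (q : ℝ) < c then A q else ∅ with hB
    have hsub : A c ⊆ ⋃ q : ℚ, B q := by
      intro ω hω
      simp only [hA, Set.mem_preimage, Set.mem_Iio] at hω
      obtain ⟨q, hq1, hq2⟩ := exists_rat_btwn hω
      refine Set.mem_iUnion.mpr ⟨q, ?_⟩
      simp only [hB, if_pos hq2]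
      exact hq1
    refine measure_mono_null hsub (measure_iUnion_null fun q => ?_)
    by_cases hq : (q : ℝ) < c
    · simp only [hB, if_pos hq]
      rcases hA01 q with h | h
      · exact h
      · exfalso
        have : c ≤ (q : ℝ) := csInf_le hSbdd h
        linarith
    · simp [hB, if_neg hq]
  have claim2 : P {ω | c < f ω} = 0 := by
    set C : ℚ → Set (EnvC d) := fun q => if c < (q : ℝ) then (A q)ᶜ else ∅ with hC
    have hsub : {ω | c < f ω} ⊆ ⋃ q : ℚ, C q := by
      intro ω hω
      simp only [Set.mem_setOf_eq] at hω
      obtain ⟨q, hq1, hq2⟩ := exists_rat_btwn hω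
      refine Set.mem_iUnion.mpr ⟨q, ?_⟩
      simp only [hC, if_pos hq1, Set.mem_compl_iff, hA, Set.mem_preimage, Set.mem_Iio, not_lt]
      linarith
    refine measure_mono_null hsub (measure_iUnion_null fun q => ?_)
    by_cases hq : c < (q : ℝ)
    · simp only [hC, if_pos hq]
      obtain ⟨t, htS, htq⟩ := (csInf_lt_iff hSbdd hSne).mp hq
      have h1 : P (A q) = 1 := by
        have hle : P (A t) ≤ P (A q) := by
          apply measure_mono
          intro ω hω
          simp only [hA, Set.mem_preimage, Set.mem_Iio] at hω ⊢
          linarith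
        have : (1 : ℝ≥0∞) ≤ P (A q) := htS ▸ hle
        exact le_antisymm prob_le_one this
      rw [← prob_compl_eq_zero_iff (hAm q)] at h1
      exact h1
    · simp [hC, if_neg hq]
  refine ⟨c, ?_⟩
  have h1 : ∀ᵐ ω ∂P, ¬ f ω < c := by
    rw [ae_iff]
    simp only [not_not]; exact claim1
  have h2 : ∀ᵐ ω ∂P, ¬ c < f ω := by
    rw [ae_iff]
    simpa only [not_not] using claim2
  filter_upwards [h1, h2] with ω hω1 hω2
  linarith [not_lt.mp hω1, not_lt.mp hω2]

theorem stmt1 (d : ℕ) (hd : 1 ≤ d) (P : Measure (EnvC d)) [IsProbabilityMeasure P]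
    (hstat : ∀ x : Zd d, P.map (shiftE x) = P)
    (herg : ∀ A : Set (EnvC d), MeasurableSet A → (∀ x : Zd d, shiftE x ⁻¹' A = A) →
      P A = 0 ∨ P A = 1)
    (hgood : ∀ᵐ ω ∂P,
      (∀ x y : Zd d, (znorm (x - y) = 1 → ω (x, y) = ω (y, x) ∧ 0 < ω (x, y)) ∧
        (1 < znorm (x - y) → ω (x, y) = 0)) ∧ ∀ x : Zd d, piC ω x < ∞)
    (hint : ∫⁻ ω, piC ω 0 ∂P < ∞) :
    let Q : Measure (EnvC d) := P.withDensity fun ω => piC ω 0 / ∫⁻ ω', piC ω' 0 ∂P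
    ∀ f : EnvC d → ℝ, Measurable f → (∃ M : ℝ, ∀ ω, |f ω| ≤ M) →
      (∀ᵐ ω ∂Q, Rop f ω = f ω) → ∃ c : ℝ, ∀ᵐ ω ∂Q, f ω = c := by
  intro Q f hf hMex hae
  obtain ⟨M, hM⟩ := hMex
  have hG : ∀ᵐ ω ∂P, Good ω := hgood
  have hsymm : ∀ᵐ ω ∂P, ∀ a b : Zd d, ω (a, b) = ω (b, a) := by
    filter_upwards [hG] with ω hω
    exact hω.symm
  set c0 : ℝ≥0∞ := ∫⁻ ω', piC ω' 0 ∂P with hc0def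
  have hc0top : c0 ≠ ∞ := hint.ne
  have hc0zero : c0 ≠ 0 := by
    intro h0
    have hz : ∀ᵐ ω ∂P, piC ω 0 = 0 := by
      have := (lintegral_eq_zero_iff measurable_piC).mp h0
      filter_upwards [this] with ω hω using hω
    have hfalse : ∀ᵐ ω ∂P, False := by
      filter_upwards [hG, hz] with ω h1 h2
      exact absurd h2 (Good.pi_pos hd h1).ne'
    have : P Set.univ = 0 := by
      simpa [ae_iff] using hfalse
    simp [measure_univ] at this
  set dens : EnvC d → ℝ≥0∞ := fun ω => piC ω 0 / c0 with hdens
  have hdm : Measurable dens := measurable_piC.div measurable_const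
  have hQd : Q = P.withDensity dens := rfl
  have hQP : Q ≪ P := hQd ▸ withDensity_absolutelyContinuous P dens
  have PtoQ : ∀ {p : EnvC d → Prop}, (∀ᵐ ω ∂P, p ω) → (∀ᵐ ω ∂Q, p ω) :=
    fun h => h.filter_mono hQP.ae_le
  have hdens_ne : ∀ᵐ ω ∂P, dens ω ≠ 0 := by
    filter_upwards [hG] with ω h
    simp [hdens, ENNReal.div_eq_zero_iff, (Good.pi_pos hd h).ne', hc0top]
  have QtoP : ∀ {p : EnvC d → Prop}, (∀ᵐ ω ∂Q, p ω) → (∀ᵐ ω ∂P, p ω) := by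
    intro p hp
    have := (ae_withDensity_iff hdm).mp (hQd ▸ hp)
    filter_upwards [this, hdens_ne] with ω h1 h2
    exact h1 h2
  -- the main objects
  set g2 : EnvC d → ℝ≥0∞ := fun ω => ENNReal.ofReal (f ω ^ 2) with hg2
  have hg2m : Measurable g2 := (hf.pow_const 2).ennreal_ofReal
  set RopE2 : EnvC d → ℝ≥0∞ :=
    fun ω => ∑' z : Zd d, ((ω (0, z) : ℝ≥0∞) / piC ω 0) * g2 (shiftE z ω) with hR2
  have hRm : Measurable RopE2 :=
    Measurable.ennreal_tsum fun z =>
      ((coord_meas 0 z).div measurable_piC).mul (hg2m.comp (measurable_shiftE z))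
  set D : EnvC d → ℝ≥0∞ :=
    fun ω => ∑' z : Zd d, ((ω (0, z) : ℝ≥0∞) / piC ω 0) *
      ENNReal.ofReal ((f (shiftE z ω) - f ω)^2) with hD
  have hDm : Measurable D :=
    Measurable.ennreal_tsum fun z =>
      ((coord_meas 0 z).div measurable_piC).mul
        (((hf.comp (measurable_shiftE z)).sub hf).pow_const 2).ennreal_ofReal
  -- the numerator measurable
  have hTm : Measurable (fun ω : EnvC d => ∑' z : Zd d, (ω (0, z) : ℝ≥0∞) * g2 (shiftE z ω)) :=
    Measurable.ennreal_tsum fun z =>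
      (coord_meas 0 z).mul (hg2m.comp (measurable_shiftE z))
  -- invariance of Q under R
  have key := invariance P hstat hsymm g2 hg2m
  have hRcalc : ∫⁻ ω, RopE2 ω ∂Q
      = c0⁻¹ * ∫⁻ ω, ∑' z : Zd d, (ω (0, z) : ℝ≥0∞) * g2 (shiftE z ω) ∂P := by
    rw [hQd, lintegral_withDensity_eq_lintegral_mul P hdm hRm, ← lintegral_const_mul c0⁻¹ hTm]
    apply lintegral_congr_ae
    filter_upwards [hG] with ω hω
    have hπ0 : piC ω 0 ≠ 0 := (Good.pi_pos hd hω).ne'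
    have hπt : piC ω 0 ≠ ∞ := hω.pi_ne_top
    simp only [Pi.mul_apply]
    calc dens ω * RopE2 ω = c0⁻¹ * (piC ω 0 * RopE2 ω) := by
          show piC ω 0 / c0 * RopE2 ω = _
          rw [div_eq_mul_inv, mul_comm (piC ω 0) c0⁻¹, mul_assoc]
      _ = c0⁻¹ * ∑' z : Zd d, (ω (0, z) : ℝ≥0∞) * g2 (shiftE z ω) := by
          congr 1
          rw [hR2, ← ENNReal.tsum_mul_left]
          apply tsum_congr
          intro z
          rw [← mul_assoc, ENNReal.mul_div_cancel hπ0 hπt]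
  have hGcalc : ∫⁻ ω, g2 ω ∂Q = c0⁻¹ * ∫⁻ ω, piC ω 0 * g2 ω ∂P := by
    rw [hQd, lintegral_withDensity_eq_lintegral_mul P hdm hg2m,
      ← lintegral_const_mul c0⁻¹ (f := fun ω => piC ω 0 * g2 ω) (measurable_piC.mul hg2m)]
    apply lintegral_congr
    intro ω
    simp only [Pi.mul_apply]
    show piC ω 0 / c0 * g2 ω = _
    rw [div_eq_mul_inv, mul_comm (piC ω 0) c0⁻¹, mul_assoc]
  have hinvQ : ∫⁻ ω, RopE2 ω ∂Q = ∫⁻ ω, g2 ω ∂Q := by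
    rw [hRcalc, key, hGcalc]
  -- finiteness of ∫ g2 dQ
  have hQu : Q Set.univ = 1 := by
    rw [hQd, withDensity_apply _ MeasurableSet.univ, Measure.restrict_univ]
    have : ∫⁻ ω, dens ω ∂P = c0 * c0⁻¹ := by
      rw [hdens]
      simp only [div_eq_mul_inv]
      rw [lintegral_mul_const _ measurable_piC]
    rw [this, ENNReal.mul_inv_cancel hc0zero hc0top]
  have hg2fin : ∫⁻ ω, g2 ω ∂Q ≠ ∞ := by
    have hle : ∀ ω, g2 ω ≤ ENNReal.ofReal (M ^ 2) := by
      intro ω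
      apply ENNReal.ofReal_le_ofReal
      rw [← sq_abs]
      exact pow_le_pow_left₀ (abs_nonneg _) (hM ω) 2
    have : ∫⁻ ω, g2 ω ∂Q ≤ ENNReal.ofReal (M ^ 2) * Q Set.univ := by
      calc ∫⁻ ω, g2 ω ∂Q ≤ ∫⁻ _, ENNReal.ofReal (M ^ 2) ∂Q := lintegral_mono hle
        _ = ENNReal.ofReal (M ^ 2) * Q Set.univ := lintegral_const _
    rw [hQu, mul_one] at this
    exact (lt_of_le_of_lt this ENNReal.ofReal_lt_top).ne
  -- goodness Q-a.e.
  have hQG : ∀ᵐ ω ∂Q, Good ω := PtoQ hG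
  -- pointwise identity Q-a.e.
  have hDae : ∀ᵐ ω ∂Q, D ω = RopE2 ω - g2 ω ∧ g2 ω ≤ RopE2 ω := by
    filter_upwards [hae, hQG] with ω h1 h2
    exact pointwise_key (Good.pi_pos hd h2).ne' h2.pi_ne_top hM h1
  have hDint : ∫⁻ ω, D ω ∂Q = 0 := by
    have e1 : ∫⁻ ω, D ω ∂Q = ∫⁻ ω, RopE2 ω - g2 ω ∂Q :=
      lintegral_congr_ae (hDae.mono fun ω h => by rw [h.1])
    rw [e1, lintegral_sub hg2m hg2fin (hDae.mono fun ω h => h.2), hinvQ, tsub_self]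
  have hD0 : ∀ᵐ ω ∂Q, D ω = 0 := (lintegral_eq_zero_iff hDm).mp hDint
  -- unit shift invariance, Q-a.e.
  have hQunit : ∀ᵐ ω ∂Q, ∀ z : Zd d, znorm z = 1 → f (shiftE z ω) = f ω := by
    filter_upwards [hD0, hQG] with ω h0 hg
    intro z hz
    have hterm : ((ω (0, z) : ℝ≥0∞) / piC ω 0) *
        ENNReal.ofReal ((f (shiftE z ω) - f ω)^2) = 0 :=
      ENNReal.tsum_eq_zero.mp (hD ▸ h0) z
    have hz' : znorm ((0 : Zd d) - z) = 1 := by rwa [zero_sub, znorm_neg]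
    have hω0z : 0 < ω (0, z) := ((hg.1 0 z).1 hz').2
    have hcoef : ((ω (0, z) : ℝ≥0∞) / piC ω 0) ≠ 0 := by
      simp [ENNReal.div_eq_zero_iff, hω0z.ne', hg.pi_ne_top]
    have : ENNReal.ofReal ((f (shiftE z ω) - f ω)^2) = 0 := by
      rcases mul_eq_zero.mp hterm with h | h
      · exact absurd h hcoef
      · exact h
    have hle : (f (shiftE z ω) - f ω)^2 ≤ 0 := ENNReal.ofReal_eq_zero.mp this
    have : (f (shiftE z ω) - f ω)^2 = 0 := le_antisymm hle (sq_nonneg _)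
    have := pow_eq_zero_iff (two_ne_zero) |>.mp this
    exact sub_eq_zero.mp this
  -- transfer to P
  have hPunit : ∀ᵐ ω ∂P, ∀ z : Zd d, znorm z = 1 → f (shiftE z ω) = f ω := QtoP hQunit
  -- all shifts
  set Sset : Set (EnvC d) :=
    ⋂ z : Zd d, ⋂ (_ : znorm z = 1), {ω | f (shiftE z ω) = f ω} with hSset
  have hSm : MeasurableSet Sset :=
    MeasurableSet.iInter fun z => MeasurableSet.iInter fun _ =>
      measurableSet_eq_fun (hf.comp (measurable_shiftE z)) hf
  have hmemS : ∀ ω, ω ∈ Sset ↔ ∀ z : Zd d, znorm z = 1 → f (shiftE z ω) = f ω := by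
    intro ω
    simp [hSset, Set.mem_iInter, Set.mem_setOf_eq]
  have hPS : ∀ᵐ ω ∂P, ω ∈ Sset := by
    filter_upwards [hPunit] with ω h
    exact (hmemS ω).mpr h
  have hPy : ∀ y : Zd d, ∀ᵐ ω ∂P, shiftE y ω ∈ Sset := by
    intro y
    have h1 : ∀ᵐ x ∂(P.map (shiftE y)), x ∈ Sset := by
      rw [hstat y]; exact hPS
    exact (ae_map_iff (measurable_shiftE y).aemeasurable hSm).mp h1
  have hPall : ∀ᵐ ω ∂P, ∀ x : Zd d, f (shiftE x ω) = f ω := by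
    have hAll : ∀ᵐ ω ∂P, ∀ y : Zd d, shiftE y ω ∈ Sset := ae_all_iff.mpr hPy
    filter_upwards [hAll] with ω hω
    apply all_shifts f ω
    intro y z hz
    exact (hmemS (shiftE y ω)).mp (hω y) z hz
  obtain ⟨c, hc⟩ := const_of_allinv P herg hf hM hPall
  exact ⟨c, PtoQ hc⟩
end
end

section
/- For every d ≥ 1, every ρ : ℤ^d → [0,1), and all x, y ∈ ℤ^d, the Green's function of the trap walk with environment ρ coincides with that of the simple random walk: g^ρ(x,y) = g(x,y), as an equality in [0,∞]. -/
open MeasureTheory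
open scoped ENNReal NNReal Classical

noncomputable section

/-- Matrix powers of a (sub-)stochastic kernel on `ℤ^d`, valued in `[0,∞]`. -/
def kpow {d : ℕ} (p : Zd d → Zd d → ℝ≥0∞) : ℕ → Zd d → Zd d → ℝ≥0∞
  | 0 => fun x y => if x = y then 1 else 0
  | n + 1 => fun x y => ∑' z : Zd d, kpow p n x z * p z y

/-- Transition kernel of the trap walk with environment `ρ`. -/
def trapK {d : ℕ} (ρ : Zd d → ℝ) (x y : Zd d) : ℝ≥0∞ :=
  if x = y then ENNReal.ofReal (ρ x)
  else if znorm (x - y) = 1 then ENNReal.ofReal ((1 - ρ x) / (2 * d)) else 0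

/-- Transition kernel of the simple random walk on `ℤ^d`. -/
def srwK (d : ℕ) (x y : Zd d) : ℝ≥0∞ :=
  if znorm (x - y) = 1 then (2 * (d : ℝ≥0∞))⁻¹ else 0

lemma znorm_zero' {d : ℕ} : znorm (0 : Zd d) = 0 := by
  simp [znorm]

lemma kpow_succ_left {d : ℕ} (p : Zd d → Zd d → ℝ≥0∞) (n : ℕ) (x y : Zd d) :
    kpow p (n+1) x y = ∑' z, p x z * kpow p n z y := by
  induction n generalizing y with
  | zero =>
    show (∑' z, kpow p 0 x z * p z y) = ∑' z, p x z * kpow p 0 z y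
    rw [tsum_eq_single x (fun z hz => by simp [kpow, (Ne.symm hz)]),
        tsum_eq_single y (fun z hz => by simp [kpow, hz])]
    simp [kpow]
  | succ n ih =>
    show (∑' z, kpow p (n+1) x z * p z y) = ∑' w, p x w * kpow p (n+1) w y
    calc (∑' z, kpow p (n+1) x z * p z y)
        = ∑' z, (∑' w, p x w * kpow p n w z) * p z y := by
          exact tsum_congr fun z => by rw [ih]
      _ = ∑' z, ∑' w, p x w * kpow p n w z * p z y := by
          exact tsum_congr fun z => (ENNReal.tsum_mul_right).symm
      _ = ∑' w, ∑' z, p x w * (kpow p n w z * p z y) := by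
          rw [ENNReal.tsum_comm]; exact tsum_congr fun w => tsum_congr fun z => by ring
      _ = ∑' w, p x w * kpow p (n+1) w y := by
          exact tsum_congr fun w => ENNReal.tsum_mul_left

set_option maxHeartbeats 1000000 in
lemma green_col {d : ℕ} (p : Zd d → Zd d → ℝ≥0∞) (x y : Zd d) :
    (∑' n, kpow p n x y)
      = (if x = y then 1 else 0) + ∑' z, p x z * ∑' n, kpow p n z y := by
  calc (∑' n, kpow p n x y)
      = kpow p 0 x y + ∑' n, kpow p (n+1) x y := tsum_eq_zero_add' ENNReal.summable
    _ = (if x = y then 1 else 0) + ∑' n, ∑' z, p x z * kpow p n z y := by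
        rw [show kpow p 0 x y = (if x = y then 1 else 0) from rfl]
        exact congrArg _ (tsum_congr fun n => kpow_succ_left p n x y)
    _ = (if x = y then 1 else 0) + ∑' z, ∑' n, p x z * kpow p n z y := by
        rw [ENNReal.tsum_comm]
    _ = (if x = y then 1 else 0) + ∑' z, p x z * ∑' n, kpow p n z y := by
        exact congrArg _ (tsum_congr fun z => ENNReal.tsum_mul_left)

lemma trapK_decomp {d : ℕ} (hd : 1 ≤ d) (ρ : Zd d → ℝ) (x z : Zd d) :
    trapK ρ x z = (if x = z then ENNReal.ofReal (ρ x) else 0)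
      + ENNReal.ofReal (1 - ρ x) * srwK d x z := by
  unfold trapK srwK
  by_cases h : x = z
  · subst h; simp [sub_self, znorm_zero']
  · rw [if_neg h, if_neg h, zero_add]
    by_cases h1 : znorm (x - z) = 1
    · rw [if_pos h1, if_pos h1]
      have hdpos : (0:ℝ) < 2 * d := by
        have : (1:ℝ) ≤ (d:ℝ) := by exact_mod_cast hd
        linarith
      rw [ENNReal.ofReal_div_of_pos hdpos, div_eq_mul_inv]
      congr 1
      rw [ENNReal.ofReal_mul (by norm_num : (0:ℝ) ≤ 2), ENNReal.ofReal_ofNat,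
        ENNReal.ofReal_natCast]
    · rw [if_neg h1, if_neg h1, mul_zero]

theorem stmt2 (d : ℕ) (hd : 1 ≤ d) (ρ : Zd d → ℝ) (hρ : ∀ x, ρ x ∈ Set.Ico (0 : ℝ) 1)
    (x y : Zd d) :
    ∑' n : ℕ, kpow (trapK ρ) n x y / ENNReal.ofReal ((1 - ρ y)⁻¹)
      = ∑' n : ℕ, kpow (srwK d) n x y := by
  classical
  have hρ0 : ∀ z, 0 ≤ ρ z := fun z => (hρ z).1
  have hρ1 : ∀ z, ρ z < 1 := fun z => (hρ z).2
  set A := trapK ρ with hA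
  set P := srwK d with hP
  set c : ℝ≥0∞ := ENNReal.ofReal ((1 - ρ y)⁻¹) with hc
  set r : Zd d → ℝ≥0∞ := fun z => ENNReal.ofReal (ρ z) with hr
  set s : Zd d → ℝ≥0∞ := fun z => ENNReal.ofReal (1 - ρ z) with hs
  have hs0 : ∀ z, s z ≠ 0 := fun z => (ENNReal.ofReal_pos.mpr (by linarith [hρ1 z])).ne'
  have hstop : ∀ z, s z ≠ ∞ := fun z => ENNReal.ofReal_ne_top
  have hr1 : ∀ z, r z ≤ 1 := fun z => ENNReal.ofReal_le_one.mpr (le_of_lt (hρ1 z))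
  have hrs : ∀ z, r z + s z = 1 := by
    intro z
    rw [hr, hs]
    rw [← ENNReal.ofReal_add (hρ0 z) (by linarith [hρ1 z])]
    norm_num
  have hcs : c = (s y)⁻¹ := by
    rw [hc, hs, ENNReal.ofReal_inv_of_pos (by linarith [hρ1 y])]
  have hsc : ∀ z : ℝ≥0∞, s y * (z * c) = z := by
    intro z
    rw [hcs, mul_comm z, ← mul_assoc, ENNReal.mul_inv_cancel (hs0 y) (hstop y), one_mul]
  have hc0 : c ≠ 0 := by
    rw [hcs]; exact ENNReal.inv_ne_zero.mpr (hstop y)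
  have hctop : c ≠ ∞ := by
    rw [hcs]; exact ENNReal.inv_ne_top.mpr (hs0 y)
  have hc1 : 1 ≤ c := by
    rw [hcs]
    exact ENNReal.one_le_inv.mpr (by rw [hs]; exact ENNReal.ofReal_le_one.mpr (by linarith [hρ0 y]))
  set F : Zd d → ℝ≥0∞ := fun z => ∑' n, kpow A n z y with hF
  set G : Zd d → ℝ≥0∞ := fun z => ∑' n, kpow P n z y with hG
  -- decomposition of sums against the trap kernel
  have hsum_decomp : ∀ (H : Zd d → ℝ≥0∞) (w : Zd d),
      (∑' z, A w z * H z) = r w * H w + s w * ∑' z, P w z * H z := by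
    intro H w
    calc (∑' z, A w z * H z)
        = ∑' z, ((if w = z then r w else 0) * H z + s w * (P w z * H z)) := by
          refine tsum_congr fun z => ?_
          rw [hA, trapK_decomp hd ρ w z, add_mul, mul_assoc]
      _ = (∑' z, (if w = z then r w else 0) * H z) + s w * ∑' z, P w z * H z := by
          rw [ENNReal.tsum_add, ENNReal.tsum_mul_left]
      _ = r w * H w + s w * ∑' z, P w z * H z := by
          congr 1
          rw [tsum_eq_single w (fun z hz => by rw [if_neg (Ne.symm hz), zero_mul])]
          rw [if_pos rfl]
  have hFeq : ∀ w, F w = (if w = y then 1 else 0) + (r w * F w + s w * ∑' z, P w z * F z) := by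
    intro w
    calc F w = (if w = y then 1 else 0) + ∑' z, A w z * F z := green_col A w y
      _ = (if w = y then 1 else 0) + (r w * F w + s w * ∑' z, P w z * F z) := by
          rw [hsum_decomp F w]
  have hGeq : ∀ w, G w = (if w = y then 1 else 0) + ∑' z, P w z * G z := by
    intro w
    exact green_col P w y
  -- G·c is a supersolution for A with source δ·c (in fact, a solution)
  have hGsuper : ∀ w, (if w = y then 1 else 0) + ∑' z, A w z * (G z * c) ≤ G w * c := by
    intro w
    have hdec : (∑' z, A w z * (G z * c))
        = r w * (G w * c) + s w * ((∑' z, P w z * G z) * c) := by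
      rw [hsum_decomp (fun z => G z * c) w]
      congr 1
      congr 1
      exact (tsum_congr fun z => (mul_assoc _ _ _).symm).trans ENNReal.tsum_mul_right
    rw [hdec]
    by_cases hw : w = y
    · subst hw
      rw [if_pos rfl, hsc]
      have hGw : G w = 1 + ∑' z, P w z * G z := by rw [hGeq w, if_pos rfl]
      have hrc : r w * c + 1 = c := by
        have h1 : s w * c = 1 := by
          have := hsc 1; rwa [one_mul] at this
        calc r w * c + 1 = r w * c + s w * c := by rw [h1]
          _ = (r w + s w) * c := (add_mul _ _ _).symm
          _ = c := by rw [hrs w, one_mul]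
      refine le_of_eq ?_
      calc 1 + (r w * (G w * c) + ∑' z, P w z * G z)
          = 1 + (r w * ((1 + ∑' z, P w z * G z) * c) + ∑' z, P w z * G z) := by rw [← hGw]
        _ = (r w * c + 1) + ((r w * c + 1) * ∑' z, P w z * G z) := by ring
        _ = c + c * ∑' z, P w z * G z := by rw [hrc]
        _ = (1 + ∑' z, P w z * G z) * c := by ring
        _ = G w * c := by rw [← hGw]
    · rw [if_neg hw, zero_add]
      have hGw : G w = ∑' z, P w z * G z := by rw [hGeq w, if_neg hw, zero_add]
      refine le_of_eq ?_
      calc r w * (G w * c) + s w * ((∑' z, P w z * G z) * c)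
          = r w * (G w * c) + s w * (G w * c) := by rw [← hGw]
        _ = (r w + s w) * (G w * c) := by ring
        _ = G w * c := by rw [hrs w, one_mul]
  -- F is a supersolution for P with source δ·c
  have hFsub : ∀ w, (if w = y then 1 else 0) * c + ∑' z, P w z * F z ≤ F w := by
    intro w
    by_cases hfin : F w = ∞
    · rw [hfin]; exact le_top
    · have hrF : r w * F w ≠ ∞ := by
        intro h
        exact hfin (top_le_iff.mp (le_trans h.symm.le
          (mul_le_of_le_one_left zero_le (hr1 w))))
      have key : s w * F w = (if w = y then 1 else 0) + s w * ∑' z, P w z * F z := by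
        have h1 : r w * F w + s w * F w
            = r w * F w + ((if w = y then 1 else 0) + s w * ∑' z, P w z * F z) := by
          calc r w * F w + s w * F w = (r w + s w) * F w := by ring
            _ = F w := by rw [hrs w, one_mul]
            _ = (if w = y then 1 else 0) + (r w * F w + s w * ∑' z, P w z * F z) := hFeq w
            _ = r w * F w + ((if w = y then 1 else 0) + s w * ∑' z, P w z * F z) := by ring
        exact (ENNReal.add_right_inj hrF).mp h1
      have h2 : F w = (s w)⁻¹ * (if w = y then 1 else 0) + ∑' z, P w z * F z := by
        have := congrArg ((s w)⁻¹ * ·) key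
        simp only [mul_add, ← mul_assoc, ENNReal.inv_mul_cancel (hs0 w) (hstop w),
          one_mul] at this
        exact this
      rw [h2]
      by_cases hw : w = y
      · subst hw
        rw [if_pos rfl, mul_one, one_mul, ← hcs]
      · simp only [if_neg hw, mul_zero, zero_mul, zero_add]
        exact le_rfl
  -- partial sums inductions
  have hdir1 : ∀ N w, (∑ n ∈ Finset.range N, kpow A n w y) ≤ G w * c := by
    intro N
    induction N with
    | zero => intro w; simp
    | succ N ih =>
      intro w
      rw [Finset.sum_range_succ']
      have hshift : (∑ n ∈ Finset.range N, kpow A (n+1) w y)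
          = ∑' z, A w z * ∑ n ∈ Finset.range N, kpow A n z y := by
        calc (∑ n ∈ Finset.range N, kpow A (n+1) w y)
            = ∑ n ∈ Finset.range N, ∑' z, A w z * kpow A n z y := by
              exact Finset.sum_congr rfl fun n _ => kpow_succ_left A n w y
          _ = ∑' z, ∑ n ∈ Finset.range N, A w z * kpow A n z y := by
              exact (Summable.tsum_finsetSum (fun n _ => ENNReal.summable)).symm
          _ = ∑' z, A w z * ∑ n ∈ Finset.range N, kpow A n z y := by
              exact tsum_congr fun z => (Finset.mul_sum _ _ _).symm
      rw [hshift]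
      have h0 : kpow A 0 w y = (if w = y then 1 else 0) := rfl
      rw [h0]
      calc (∑' z, A w z * ∑ n ∈ Finset.range N, kpow A n z y) + (if w = y then 1 else 0)
          ≤ (∑' z, A w z * (G z * c)) + (if w = y then 1 else 0) :=
            add_le_add (ENNReal.tsum_le_tsum fun z => mul_le_mul_right (ih z) _) le_rfl
        _ = (if w = y then 1 else 0) + ∑' z, A w z * (G z * c) := by rw [add_comm]
        _ ≤ G w * c := hGsuper w
  have hdir2 : ∀ N w, (∑ n ∈ Finset.range N, kpow P n w y) * c ≤ F w := by
    intro N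
    induction N with
    | zero => intro w; simp
    | succ N ih =>
      intro w
      rw [Finset.sum_range_succ']
      have hshift : (∑ n ∈ Finset.range N, kpow P (n+1) w y)
          = ∑' z, P w z * ∑ n ∈ Finset.range N, kpow P n z y := by
        calc (∑ n ∈ Finset.range N, kpow P (n+1) w y)
            = ∑ n ∈ Finset.range N, ∑' z, P w z * kpow P n z y := by
              exact Finset.sum_congr rfl fun n _ => kpow_succ_left P n w y
          _ = ∑' z, ∑ n ∈ Finset.range N, P w z * kpow P n z y := by
              exact (Summable.tsum_finsetSum (fun n _ => ENNReal.summable)).symm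
          _ = ∑' z, P w z * ∑ n ∈ Finset.range N, kpow P n z y := by
              exact tsum_congr fun z => (Finset.mul_sum _ _ _).symm
      have h0 : kpow P 0 w y = (if w = y then 1 else 0) := rfl
      rw [hshift, h0, add_mul]
      calc (∑' z, P w z * ∑ n ∈ Finset.range N, kpow P n z y) * c
            + (if w = y then 1 else 0) * c
          ≤ (∑' z, P w z * F z) + (if w = y then 1 else 0) * c := by
            refine add_le_add ?_ le_rfl
            calc (∑' z, P w z * ∑ n ∈ Finset.range N, kpow P n z y) * c
                = ∑' z, P w z * ((∑ n ∈ Finset.range N, kpow P n z y) * c) := by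
                  rw [← ENNReal.tsum_mul_right]
                  exact tsum_congr fun z => mul_assoc _ _ _
              _ ≤ ∑' z, P w z * F z :=
                  ENNReal.tsum_le_tsum fun z => mul_le_mul_right (ih z) _
        _ = (if w = y then 1 else 0) * c + ∑' z, P w z * F z := by rw [add_comm]
        _ ≤ F w := hFsub w
  have hmain : F x = G x * c := by
    apply le_antisymm
    · calc F x = ⨆ N, ∑ n ∈ Finset.range N, kpow A n x y := ENNReal.tsum_eq_iSup_nat
        _ ≤ G x * c := iSup_le fun N => hdir1 N x
    · calc G x * c = (⨆ N, ∑ n ∈ Finset.range N, kpow P n x y) * c :=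
          congrArg (· * c) ENNReal.tsum_eq_iSup_nat
        _ = ⨆ N, (∑ n ∈ Finset.range N, kpow P n x y) * c := ENNReal.iSup_mul _ _
        _ ≤ F x := iSup_le fun N => hdir2 N x
  calc (∑' n : ℕ, kpow A n x y / c)
      = (∑' n : ℕ, kpow A n x y) * c⁻¹ := by
        simp only [div_eq_mul_inv]
        exact ENNReal.tsum_mul_right
    _ = (G x * c) * c⁻¹ := by
        rw [show (∑' n : ℕ, kpow A n x y) = G x * c from hmain]
    _ = G x := by rw [mul_assoc, ENNReal.mul_inv_cancel hc0 hctop, mul_one]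
    _ = ∑' n : ℕ, kpow P n x y := rfl
end
end

section
/- Let d ∈ {1,2} and let P be a probability measure on conductance environments on ℤ^d such that sup over nearest-neighbor pairs x∼y of E_P[ω_{x,y}] is finite. Then for P-almost every ω, the Markov chain on ℤ^d with transition probabilities p_ω(x,y) = ω_{x,y}/π_ω(x), started at 0, is recurrent: it returns to 0 with probability one, i.e. the trajectory measure of the chain started at 0 assigns probability one to the event {∃ n ≥ 1 : X_n = 0}. -/
open MeasureTheory
open scoped ENNReal NNReal Classical

noncomputable section

/-- `ω` is a conductance environment: `ω_{x,y} = ω_{y,x} > 0` for `|x-y| = 1`,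
and `ω_{x,y} = 0` otherwise. -/
def IsCondEnv {d : ℕ} (ω : EnvC d) : Prop :=
  ∀ x y : Zd d, (znorm (x - y) = 1 → ω (x, y) = ω (y, x) ∧ 0 < ω (x, y)) ∧
    (znorm (x - y) ≠ 1 → ω (x, y) = 0)

/-- Transition probabilities `p_ω(x,y) = ω_{x,y}/π_ω(x)` of the walk in conductances `ω`. -/
def pC {d : ℕ} (ω : EnvC d) (x y : Zd d) : ℝ≥0∞ := (ω (x, y) : ℝ≥0∞) / piC ω x

/-- Probability, for the walk in environment `ω` started at `0`, of returning to `0`: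
the sum over `n ≥ 0` of the probability that the first return occurs at time `n+1`,
computed via the kernel killed upon entering `0`. -/
def returnProb {d : ℕ} (ω : EnvC d) : ℝ≥0∞ :=
  ∑' n : ℕ, ∑' z : Zd d,
    kpow (fun a b => if b = 0 then 0 else pC ω a b) n 0 z * pC ω z 0

namespace RecAux

variable {d : ℕ}

def eunit (i : Fin d) : Zd d := fun j => if j = i then 1 else 0

@[simp] lemma eunit_apply_self (i : Fin d) : eunit i i = 1 := by simp [eunit]

lemma sq_int_sum_eq_one {v : Zd d} (h : ∑ i, (v i)^2 = 1) :
    ∃ i, (v = eunit i ∨ v = - eunit i) := by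
  have hex : ∃ i, v i ≠ 0 := by
    by_contra hc
    push_neg at hc
    simp [hc] at h
  obtain ⟨i, hi⟩ := hex
  have h1 : 1 ≤ (v i)^2 := by nlinarith [Int.one_le_abs hi, sq_abs (v i)]
  have hsplit : (v i)^2 + ∑ j ∈ Finset.univ.erase i, (v j)^2 = 1 := by
    rw [Finset.add_sum_erase Finset.univ (fun j => (v j)^2) (Finset.mem_univ i)]
    exact h
  have hrestnn : 0 ≤ ∑ j ∈ Finset.univ.erase i, (v j)^2 :=
    Finset.sum_nonneg (fun j _ => sq_nonneg _)
  have hvi : (v i)^2 = 1 := by linarith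
  have hzero : ∀ j, j ≠ i → v j = 0 := by
    intro j hj
    have hle : (v j)^2 ≤ ∑ k ∈ Finset.univ.erase i, (v k)^2 :=
      Finset.single_le_sum (fun k _ => sq_nonneg (v k)) (by simp [hj])
    nlinarith [sq_nonneg (v j)]
  have hpm : v i = 1 ∨ v i = -1 := by
    rcases mul_eq_zero.mp (show (v i - 1) * (v i + 1) = 0 by nlinarith) with h' | h'
    · left; linarith
    · right; linarith
  refine ⟨i, ?_⟩
  rcases hpm with h' | h'
  · left; funext j
    by_cases hj : j = i
    · subst hj; simpa [eunit]
    · simp [eunit, hj, hzero j hj]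
  · right; funext j
    by_cases hj : j = i
    · subst hj; simpa [eunit]
    · simp [eunit, hj, hzero j hj]

lemma znorm_eq_one_iff {v : Zd d} :
    znorm v = 1 ↔ ∃ i, (v = eunit i ∨ v = - eunit i) := by
  rw [znorm, Real.sqrt_eq_one]
  constructor
  · intro h
    apply sq_int_sum_eq_one
    have : ((∑ i, (v i)^2 : ℤ) : ℝ) = 1 := by push_cast; simpa using h
    exact_mod_cast this
  · rintro ⟨i, h | h⟩ <;> subst h <;>
      · rw [show (1:ℝ) = ∑ j, (if j = i then (1:ℝ) else 0) by simp]
        apply Finset.sum_congr rfl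
        intro j _
        by_cases hj : j = i <;> simp [eunit, hj]

lemma znorm_sub_comm (x y : Zd d) : znorm (x - y) = znorm (y - x) := by
  unfold znorm
  congr 1
  apply Finset.sum_congr rfl
  intro i _
  have : ((x - y) i : ℝ) = -(((y - x) i : ℝ)) := by push_cast [Pi.sub_apply]; ring
  rw [this]; ring

/-- neighbors of x -/
def nbr (x : Zd d) : Finset (Zd d) :=
  (Finset.univ : Finset (Fin d × Bool)).image
    (fun p => if p.2 then x + eunit p.1 else x - eunit p.1)

lemma mem_nbr_iff {x y : Zd d} : y ∈ nbr x ↔ znorm (x - y) = 1 := by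
  rw [znorm_sub_comm, znorm_eq_one_iff]
  constructor
  · intro hy
    simp only [nbr, Finset.mem_image, Finset.mem_univ, true_and] at hy
    obtain ⟨⟨i, b⟩, hb⟩ := hy
    cases b
    · simp only [Bool.false_eq_true, if_false] at hb
      exact ⟨i, Or.inr (by rw [← hb]; ring)⟩
    · simp only [if_true] at hb
      exact ⟨i, Or.inl (by rw [← hb]; ring)⟩
  · rintro ⟨i, h | h⟩
    · refine Finset.mem_image.mpr ⟨(i, true), Finset.mem_univ _, ?_⟩
      simp only [if_true]
      have : y = x + eunit i := by rw [← sub_add_cancel y x, h]; ring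
      rw [this]
    · refine Finset.mem_image.mpr ⟨(i, false), Finset.mem_univ _, ?_⟩
      simp only [Bool.false_eq_true, if_false]
      have : y = x - eunit i := by
        have : y - x = -eunit i := h
        rw [← sub_add_cancel y x, this]; ring
      rw [this]

lemma card_nbr_le (x : Zd d) : (nbr x).card ≤ 2 * d := by
  calc (nbr x).card ≤ (Finset.univ : Finset (Fin d × Bool)).card := Finset.card_image_le
    _ = 2 * d := by simp [Finset.card_univ, mul_comm]


section Env
variable {ω : EnvC d} (hω : IsCondEnv ω)
include hω

lemma omega_eq_zero {x y : Zd d} (h : y ∉ nbr x) : ω (x, y) = 0 :=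
  (hω x y).2 (fun hc => h (mem_nbr_iff.mpr hc))

lemma omega_symm (x y : Zd d) : ω (x, y) = ω (y, x) := by
  by_cases h : znorm (x - y) = 1
  · exact ((hω x y).1 h).1
  · rw [(hω x y).2 h, (hω y x).2 (by rwa [znorm_sub_comm])]

lemma omega_pos {x y : Zd d} (h : y ∈ nbr x) : 0 < ω (x, y) :=
  ((hω x y).1 (mem_nbr_iff.mp h)).2

lemma piC_eq_sum (x : Zd d) : piC ω x = ∑ y ∈ nbr x, (ω (x, y) : ℝ≥0∞) :=
  tsum_eq_sum (fun y hy => by rw [omega_eq_zero hω hy]; simp)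

lemma piC_ne_top (x : Zd d) : piC ω x ≠ ∞ := by
  rw [piC_eq_sum hω]
  exact (ENNReal.sum_lt_top.mpr (fun y _ => ENNReal.coe_lt_top)).ne

lemma piC_pos (hd : 0 < d) (x : Zd d) : 0 < piC ω x := by
  have i0 : Fin d := ⟨0, hd⟩
  have hmem : x + eunit i0 ∈ nbr x := by
    rw [mem_nbr_iff, znorm_sub_comm, znorm_eq_one_iff]
    exact ⟨i0, Or.inl (by ring)⟩
  rw [piC_eq_sum hω]
  refine lt_of_lt_of_le ?_ (Finset.single_le_sum (f := fun y => (ω (x, y) : ℝ≥0∞))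
    (fun y _ => zero_le) hmem)
  simpa using (ENNReal.coe_pos.mpr (omega_pos hω hmem))

lemma pC_tsum_eq_one (hd : 0 < d) (x : Zd d) : ∑' y : Zd d, pC ω x y = 1 := by
  unfold pC
  simp only [div_eq_mul_inv]
  rw [ENNReal.tsum_mul_right]
  exact ENNReal.mul_inv_cancel (piC_pos hω hd x).ne' (piC_ne_top hω x)

lemma pC_ne_top (hd : 0 < d) (x y : Zd d) : pC ω x y ≠ ∞ := by
  unfold pC
  exact (ENNReal.div_lt_top ENNReal.coe_ne_top (piC_pos hω hd x).ne').ne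

lemma pC_le_one (hd : 0 < d) (x y : Zd d) : pC ω x y ≤ 1 := by
  rw [← pC_tsum_eq_one hω hd x]
  exact ENNReal.le_tsum y

end Env

section Walk
variable {ω : EnvC d} (hω : IsCondEnv ω) (hd : 0 < d)

/-- the kernel killed on entering 0 -/
def qk (ω : EnvC d) : Zd d → Zd d → ℝ≥0∞ := fun a b => if b = 0 then 0 else pC ω a b

include hω hd

lemma qk_add_r (y : Zd d) : ∑' z : Zd d, qk ω y z + pC ω y 0 = 1 := by
  rw [← pC_tsum_eq_one hω hd y]
  have : ∀ z : Zd d, qk ω y z + (if z = 0 then pC ω y 0 else 0) = pC ω y z := by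
    intro z
    by_cases hz : z = 0 <;> simp [qk, hz]
  calc ∑' z : Zd d, qk ω y z + pC ω y 0
      = ∑' z : Zd d, qk ω y z + ∑' z : Zd d, (if z = 0 then pC ω y 0 else 0) := by
        congr 1
        rw [tsum_eq_single (0 : Zd d) (fun b hb => if_neg hb)]
        exact (if_pos rfl).symm
    _ = ∑' z : Zd d, (qk ω y z + (if z = 0 then pC ω y 0 else 0)) := (ENNReal.tsum_add).symm
    _ = ∑' z : Zd d, pC ω y z := by simp only [this]

lemma mass_step (n : ℕ) :
    (∑' z : Zd d, kpow (qk ω) (n+1) 0 z) + (∑' z : Zd d, kpow (qk ω) n 0 z * pC ω z 0)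
      = ∑' z : Zd d, kpow (qk ω) n 0 z := by
  have h1 : (∑' z : Zd d, kpow (qk ω) (n+1) 0 z)
      = ∑' y : Zd d, kpow (qk ω) n 0 y * ∑' z : Zd d, qk ω y z := by
    show (∑' z : Zd d, ∑' y : Zd d, kpow (qk ω) n 0 y * qk ω y z) = _
    rw [ENNReal.tsum_comm]
    exact tsum_congr (fun y => ENNReal.tsum_mul_left)
  rw [h1, ← ENNReal.tsum_add]
  refine tsum_congr (fun y => ?_)
  rw [← mul_add, qk_add_r hω hd, mul_one]

lemma mass_invariant (n : ℕ) :
    (∑' z : Zd d, kpow (qk ω) n 0 z)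
      + ∑ m ∈ Finset.range n, (∑' z : Zd d, kpow (qk ω) m 0 z * pC ω z 0) = 1 := by
  induction n with
  | zero =>
      show (∑' z : Zd d, (if (0:Zd d) = z then (1:ℝ≥0∞) else 0)) + 0 = 1
      rw [add_zero, tsum_eq_single (0 : Zd d) (fun b hb => if_neg (fun h => hb h.symm))]
      exact if_pos rfl
  | succ n ih =>
      rw [Finset.sum_range_succ]
      have hstep := mass_step hω hd n
      calc (∑' z : Zd d, kpow (qk ω) (n+1) 0 z)
            + (∑ m ∈ Finset.range n, (∑' z : Zd d, kpow (qk ω) m 0 z * pC ω z 0)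
              + (∑' z : Zd d, kpow (qk ω) n 0 z * pC ω z 0))
          = ((∑' z : Zd d, kpow (qk ω) (n+1) 0 z) + (∑' z : Zd d, kpow (qk ω) n 0 z * pC ω z 0))
            + ∑ m ∈ Finset.range n, (∑' z : Zd d, kpow (qk ω) m 0 z * pC ω z 0) := by ring
        _ = (∑' z : Zd d, kpow (qk ω) n 0 z)
            + ∑ m ∈ Finset.range n, (∑' z : Zd d, kpow (qk ω) m 0 z * pC ω z 0) := by rw [hstep]
        _ = 1 := ih

lemma returnProb_le_one : returnProb ω ≤ 1 := by
  have : returnProb ω = ⨆ n, ∑ m ∈ Finset.range n,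
      (∑' z : Zd d, kpow (qk ω) m 0 z * pC ω z 0) := by
    rw [returnProb]
    exact ENNReal.tsum_eq_iSup_nat
  rw [this]
  refine iSup_le (fun n => ?_)
  have := mass_invariant hω hd n
  calc ∑ m ∈ Finset.range n, (∑' z : Zd d, kpow (qk ω) m 0 z * pC ω z 0)
      ≤ (∑' z : Zd d, kpow (qk ω) n 0 z) + ∑ m ∈ Finset.range n, (∑' z : Zd d, kpow (qk ω) m 0 z * pC ω z 0) := le_add_self
    _ = 1 := this

end Walk


section Box
variable (ω : EnvC d) (A : Finset (Zd d))

/-- kernel killed outside A (in particular at 0, since 0 ∉ A) -/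
def Qk : Zd d → Zd d → ℝ≥0∞ := fun a b => if b ∈ A then pC ω a b else 0

/-- iterates (Qk^n r)(x), r x = pC x 0 -/
def qit : ℕ → Zd d → ℝ≥0∞
  | 0 => fun x => pC ω x 0
  | n + 1 => fun x => ∑' y : Zd d, Qk ω A x y * qit n y

/-- probability of hitting 0 before leaving A, from x (roughly) -/
def hitf : Zd d → ℝ≥0∞ := fun x => ∑' n : ℕ, qit ω A n x

/-- hitf extended with boundary values -/
def Hf : Zd d → ℝ≥0∞ := fun x => if x = 0 then 1 else if x ∈ A then hitf ω A x else 0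

variable {ω} {A} (hω : IsCondEnv ω) (hd : 0 < d) (h0A : (0 : Zd d) ∉ A)

include hω hd h0A

lemma qit_partial_le_one : ∀ n x, ∑ m ∈ Finset.range n, qit ω A m x ≤ 1 := by
  intro n
  induction n with
  | zero => intro x; simp
  | succ n ih =>
      intro x
      have key : ∑ m ∈ Finset.range (n+1), qit ω A m x
          = pC ω x 0 + ∑' y : Zd d, Qk ω A x y * ∑ m ∈ Finset.range n, qit ω A m y := by
        rw [Finset.sum_range_succ']
        have : ∀ y, Qk ω A x y * ∑ m ∈ Finset.range n, qit ω A m y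
            = ∑ m ∈ Finset.range n, Qk ω A x y * qit ω A m y :=
          fun y => Finset.mul_sum _ _ _
        rw [show (∑' y : Zd d, Qk ω A x y * ∑ m ∈ Finset.range n, qit ω A m y)
            = ∑ m ∈ Finset.range n, ∑' y : Zd d, Qk ω A x y * qit ω A m y by
          rw [← Summable.tsum_finsetSum (fun m _ => ENNReal.summable)]
          exact tsum_congr fun y => (this y)]
        rw [add_comm]
        rfl
      rw [key]
      have h2 : (∑' y : Zd d, Qk ω A x y * ∑ m ∈ Finset.range n, qit ω A m y)
          ≤ ∑' y : Zd d, Qk ω A x y := by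
        refine Summable.tsum_le_tsum (fun y => ?_) ENNReal.summable ENNReal.summable
        calc Qk ω A x y * ∑ m ∈ Finset.range n, qit ω A m y
            ≤ Qk ω A x y * 1 := mul_le_mul_right (ih y) _
          _ = Qk ω A x y := mul_one _
      calc pC ω x 0 + ∑' y : Zd d, Qk ω A x y * ∑ m ∈ Finset.range n, qit ω A m y
          ≤ pC ω x 0 + ∑' y : Zd d, Qk ω A x y := add_le_add_right h2 _
        _ ≤ pC ω x 0 + ∑' y : Zd d, qk ω x y := by
            refine add_le_add_right (Summable.tsum_le_tsum (fun y => ?_) ENNReal.summable ENNReal.summable) _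
            unfold Qk qk
            by_cases hy : y ∈ A
            · rw [if_pos hy, if_neg (fun h => h0A (by rw [← h]; exact hy))]
            · rw [if_neg hy]; exact zero_le
        _ = 1 := by rw [add_comm]; exact qk_add_r hω hd x

lemma hitf_le_one (x : Zd d) : hitf ω A x ≤ 1 := by
  rw [hitf, ENNReal.tsum_eq_iSup_nat]
  exact iSup_le fun n => qit_partial_le_one hω hd h0A n x

lemma Hf_le_one (x : Zd d) : Hf ω A x ≤ 1 := by
  unfold Hf
  split_ifs
  · exact le_rfl
  · exact hitf_le_one hω hd h0A _
  · exact zero_le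

omit h0A

omit hω hd in
lemma hitf_eq (x : Zd d) :
    hitf ω A x = pC ω x 0 + ∑' y : Zd d, Qk ω A x y * hitf ω A y := by
  rw [hitf, tsum_eq_zero_add' ENNReal.summable]
  congr 1
  calc (∑' n : ℕ, qit ω A (n+1) x) = ∑' n : ℕ, ∑' y : Zd d, Qk ω A x y * qit ω A n y := rfl
    _ = ∑' y : Zd d, ∑' n : ℕ, Qk ω A x y * qit ω A n y := ENNReal.tsum_comm
    _ = ∑' y : Zd d, Qk ω A x y * hitf ω A y := tsum_congr fun y => ENNReal.tsum_mul_left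

omit hω hd in
include h0A in
lemma hitf_eq_pH (x : Zd d) :
    hitf ω A x = ∑' y : Zd d, pC ω x y * Hf ω A y := by
  rw [hitf_eq (ω := ω) (A := A) x]
  have : ∀ y : Zd d, pC ω x y * Hf ω A y
      = (if y = 0 then pC ω x 0 else 0) + Qk ω A x y * hitf ω A y := by
    intro y
    unfold Hf Qk
    by_cases hy : y = 0
    · subst hy
      rw [if_pos rfl, if_pos rfl, if_neg h0A, zero_mul, add_zero, mul_one]
    · rw [if_neg hy, if_neg hy, zero_add]
      by_cases hyA : y ∈ A
      · rw [if_pos hyA, if_pos hyA]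
      · rw [if_neg hyA, if_neg hyA, mul_zero, zero_mul]
  rw [tsum_congr this, ENNReal.tsum_add]
  congr 1
  rw [tsum_eq_single (0 : Zd d) (fun b hb => if_neg hb), if_pos rfl]


end Box

section Lower
variable {ω : EnvC d} {A : Finset (Zd d)}

lemma kpow_mono {p q : Zd d → Zd d → ℝ≥0∞} (hpq : ∀ x y, p x y ≤ q x y) :
    ∀ n x y, kpow p n x y ≤ kpow q n x y := by
  intro n
  induction n with
  | zero => intro x y; exact le_rfl
  | succ n ih =>
      intro x y
      refine Summable.tsum_le_tsum (fun z => ?_) ENNReal.summable ENNReal.summable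
      exact mul_le_mul' (ih x z) (hpq z y)

lemma Qk_le_qk (h0A : (0 : Zd d) ∉ A) : ∀ x y, Qk ω A x y ≤ qk ω x y := by
  intro x y
  unfold Qk qk
  by_cases hy : y ∈ A
  · rw [if_pos hy, if_neg (fun h => h0A (by rw [← h]; exact hy))]
  · rw [if_neg hy]; exact zero_le

lemma kpow_qit (n m : ℕ) (x : Zd d) :
    ∑' z : Zd d, kpow (Qk ω A) n x z * qit ω A m z = qit ω A (n + m) x := by
  induction n generalizing m x with
  | zero =>
      rw [tsum_eq_single x (fun b hb => by
        show (if x = b then (1:ℝ≥0∞) else 0) * _ = 0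
        rw [if_neg (fun h => hb h.symm), zero_mul])]
      show (if x = x then (1:ℝ≥0∞) else 0) * _ = _
      rw [if_pos rfl, one_mul, Nat.zero_add]
  | succ n ih =>
      have : ∀ z : Zd d, kpow (Qk ω A) (n+1) x z * qit ω A m z
          = ∑' y : Zd d, kpow (Qk ω A) n x y * (Qk ω A y z * qit ω A m z) := by
        intro z
        show (∑' y : Zd d, kpow (Qk ω A) n x y * Qk ω A y z) * qit ω A m z = _
        rw [← ENNReal.tsum_mul_right]
        exact tsum_congr fun y => mul_assoc _ _ _
      rw [tsum_congr this, ENNReal.tsum_comm]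
      have : ∀ y : Zd d, (∑' z : Zd d, kpow (Qk ω A) n x y * (Qk ω A y z * qit ω A m z))
          = kpow (Qk ω A) n x y * qit ω A (m+1) y := by
        intro y
        rw [ENNReal.tsum_mul_left]
        rfl
      rw [tsum_congr this, ih (m+1) x, Nat.succ_add, Nat.add_succ]

lemma returnProb_ge_hitf (h0A : (0 : Zd d) ∉ A) : hitf ω A 0 ≤ returnProb ω := by
  rw [returnProb, hitf]
  refine Summable.tsum_le_tsum (fun n => ?_) ENNReal.summable ENNReal.summable
  have := kpow_qit (ω := ω) (A := A) n 0 (0 : Zd d)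
  rw [Nat.add_zero] at this
  rw [← this]
  refine Summable.tsum_le_tsum (fun z => ?_) ENNReal.summable ENNReal.summable
  exact mul_le_mul' (kpow_mono (Qk_le_qk h0A) n 0 z) le_rfl

end Lower


section Real
variable (ω : EnvC d) (A : Finset (Zd d))

def ωR : Zd d → Zd d → ℝ := fun x y => ((ω (x, y) : ℝ≥0) : ℝ)
def πF : Zd d → ℝ := fun x => (piC ω x).toReal
def HR : Zd d → ℝ := fun x => (Hf ω A x).toReal
def hR : Zd d → ℝ := fun x => (hitf ω A x).toReal

variable {ω A} (hω : IsCondEnv ω) (hd : 0 < d) (h0A : (0 : Zd d) ∉ A)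

lemma ωR_nonneg (x y : Zd d) : 0 ≤ ωR ω x y := (ω (x, y)).coe_nonneg

include hω in
lemma ωR_symm (x y : Zd d) : ωR ω x y = ωR ω y x := by
  unfold ωR; rw [omega_symm hω]

include hω in
lemma ωR_eq_zero {x y : Zd d} (h : y ∉ nbr x) : ωR ω x y = 0 := by
  unfold ωR; rw [omega_eq_zero hω h]; simp

include hω hd in
lemma πF_pos (x : Zd d) : 0 < πF ω x :=
  ENNReal.toReal_pos (piC_pos hω hd x).ne' (piC_ne_top hω x)

include hω in
lemma πF_eq_sum (x : Zd d) : πF ω x = ∑ y ∈ nbr x, ωR ω x y := by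
  unfold πF
  rw [piC_eq_sum hω, ENNReal.toReal_sum (fun y _ => ENNReal.coe_ne_top)]
  rfl

include hω hd h0A in
lemma Hf_ne_top (x : Zd d) : Hf ω A x ≠ ∞ :=
  (lt_of_le_of_lt (Hf_le_one hω hd h0A x) ENNReal.one_lt_top).ne

include hω hd h0A in
lemma hitf_ne_top (x : Zd d) : hitf ω A x ≠ ∞ :=
  (lt_of_le_of_lt (hitf_le_one hω hd h0A x) ENNReal.one_lt_top).ne

include hω hd h0A in
lemma harmonic_real (x : Zd d) :
    πF ω x * hR ω A x = ∑ y ∈ nbr x, ωR ω x y * HR ω A y := by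
  have key : piC ω x * hitf ω A x = ∑' y : Zd d, (ω (x, y) : ℝ≥0∞) * Hf ω A y := by
    rw [hitf_eq_pH h0A x, ← ENNReal.tsum_mul_left]
    refine tsum_congr fun y => ?_
    rw [← mul_assoc]
    congr 1
    rw [mul_comm, pC]
    exact ENNReal.div_mul_cancel (piC_pos hω hd x).ne' (piC_ne_top hω x)
  have key2 : piC ω x * hitf ω A x = ∑ y ∈ nbr x, (ω (x, y) : ℝ≥0∞) * Hf ω A y := by
    rw [key]
    exact tsum_eq_sum (fun y hy => by rw [omega_eq_zero hω hy]; simp)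
  have := congrArg ENNReal.toReal key2
  rw [ENNReal.toReal_mul] at this
  rw [ENNReal.toReal_sum (fun y _ => ENNReal.mul_ne_top ENNReal.coe_ne_top
    (Hf_ne_top hω hd h0A y))] at this
  show (piC ω x).toReal * (hitf ω A x).toReal = _
  rw [this]
  exact Finset.sum_congr rfl fun y _ => by rw [ENNReal.toReal_mul]; rfl

omit hω hd h0A

lemma HR_zero : HR ω A 0 = 1 := by unfold HR Hf; rw [if_pos rfl]; simp

include h0A in
lemma HR_eq_hR {x : Zd d} (hx : x ∈ A) : HR ω A x = hR ω A x := by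
  unfold HR Hf hR
  rw [if_neg (fun h => h0A (by rw [← h]; exact hx)), if_pos hx]

lemma HR_outside {x : Zd d} (hx : x ∉ A) (hx0 : x ≠ 0) : HR ω A x = 0 := by
  unfold HR Hf
  rw [if_neg hx0, if_neg hx]
  simp

include hω hd h0A in
lemma hR_le_one (x : Zd d) : hR ω A x ≤ 1 := by
  unfold hR
  rw [show (1:ℝ) = (1:ℝ≥0∞).toReal by simp]
  exact ENNReal.toReal_mono ENNReal.one_ne_top (hitf_le_one hω hd h0A x)

end Real


section Dirichlet
variable {ω : EnvC d} {A T : Finset (Zd d)} (hω : IsCondEnv ω) (hd : 0 < d)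
  (h0A : (0 : Zd d) ∉ A) (h0T : (0 : Zd d) ∈ T)
  (hclos : ∀ x ∈ insert (0 : Zd d) A, nbr x ⊆ T)

include hω

lemma parts (u v : Zd d → ℝ) (hv : ∀ x, x ∉ insert (0 : Zd d) A → v x = 0) :
    (hclos' : ∀ x ∈ insert (0 : Zd d) A, nbr x ⊆ T) →
    ∑ x ∈ T, ∑ y ∈ T, ωR ω x y * (u x - u y) * (v x - v y)
      = 2 * ∑ x ∈ T, v x * (πF ω x * u x - ∑ y ∈ nbr x, ωR ω x y * u y) := by
  intro hclos'
  have expand : ∑ x ∈ T, ∑ y ∈ T, ωR ω x y * (u x - u y) * (v x - v y)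
      = (∑ x ∈ T, ∑ y ∈ T, ωR ω x y * (u x - u y) * v x)
        - ∑ x ∈ T, ∑ y ∈ T, ωR ω x y * (u x - u y) * v y := by
    rw [← Finset.sum_sub_distrib]
    refine Finset.sum_congr rfl fun x _ => ?_
    rw [← Finset.sum_sub_distrib]
    exact Finset.sum_congr rfl fun y _ => by ring
  have swap : ∑ x ∈ T, ∑ y ∈ T, ωR ω x y * (u x - u y) * v y
      = - ∑ x ∈ T, ∑ y ∈ T, ωR ω x y * (u x - u y) * v x := by
    rw [Finset.sum_comm]
    rw [← Finset.sum_neg_distrib]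
    refine Finset.sum_congr rfl fun y _ => ?_
    rw [← Finset.sum_neg_distrib]
    refine Finset.sum_congr rfl fun x _ => ?_
    rw [ωR_symm hω x y]
    ring
  rw [expand, swap, sub_neg_eq_add, ← two_mul]
  congr 1
  refine Finset.sum_congr rfl fun x hxT => ?_
  have inner : ∑ y ∈ T, ωR ω x y * (u x - u y) * v x
      = v x * (∑ y ∈ T, ωR ω x y * u x - ∑ y ∈ T, ωR ω x y * u y) := by
    rw [← Finset.sum_sub_distrib, Finset.mul_sum]
    exact Finset.sum_congr rfl fun y _ => by ring
  rw [inner]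
  by_cases hvx : v x = 0
  · rw [hvx]; ring
  · have hxA : x ∈ insert (0 : Zd d) A := by
      by_contra hc; exact hvx (hv x hc)
    have hnbr : nbr x ⊆ T := hclos' x hxA
    congr 2
    · rw [← Finset.sum_mul, πF_eq_sum hω x,
        Finset.sum_subset hnbr (fun y _ hy => ωR_eq_zero hω hy)]
    · exact (Finset.sum_subset hnbr (fun y _ hy => by rw [ωR_eq_zero hω hy, zero_mul])).symm

include hd h0A h0T hclos in
lemma dirichlet_bound (f : Zd d → ℝ) (hf0 : f 0 = 1)
    (hfsupp : ∀ x, x ∉ insert (0 : Zd d) A → f x = 0) :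
    2 * (πF ω 0 * (1 - hR ω A 0))
      ≤ ∑ x ∈ T, ∑ y ∈ T, ωR ω x y * (f x - f y)^2 := by
  have husupp : ∀ x, x ∉ insert (0 : Zd d) A → HR ω A x = 0 := by
    intro x hx
    simp only [Finset.mem_insert, not_or] at hx
    exact HR_outside hx.2 hx.1
  have hgsupp : ∀ x, x ∉ insert (0 : Zd d) A → f x - HR ω A x = 0 := by
    intro x hx
    rw [hfsupp x hx, husupp x hx, sub_zero]
  have hcA : ∀ x ∈ A, πF ω x * HR ω A x - ∑ y ∈ nbr x, ωR ω x y * HR ω A y = 0 := by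
    intro x hxA
    rw [HR_eq_hR h0A hxA, harmonic_real hω hd h0A x, sub_self]
  have hc0 : πF ω 0 * HR ω A 0 - ∑ y ∈ nbr 0, ωR ω 0 y * HR ω A y
      = πF ω 0 * (1 - hR ω A 0) := by
    rw [HR_zero, ← harmonic_real hω hd h0A 0]
    ring
  -- B(u,u)
  have hBuu : ∑ x ∈ T, ∑ y ∈ T, ωR ω x y * (HR ω A x - HR ω A y) * (HR ω A x - HR ω A y)
      = 2 * (πF ω 0 * (1 - hR ω A 0)) := by
    rw [parts hω (HR ω A) (HR ω A) husupp hclos]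
    congr 1
    rw [Finset.sum_eq_single_of_mem (0 : Zd d) h0T (fun x _ hne => ?_)]
    · rw [hc0, HR_zero, one_mul]
    · by_cases hxA : x ∈ A
      · rw [hcA x hxA, mul_zero]
      · rw [husupp x (by simp [hne, hxA]), zero_mul]
  -- B(u,g) = 0
  have hBug : ∑ x ∈ T, ∑ y ∈ T, ωR ω x y * (HR ω A x - HR ω A y)
        * ((f x - HR ω A x) - (f y - HR ω A y)) = 0 := by
    rw [parts hω (HR ω A) (fun x => f x - HR ω A x) hgsupp hclos]
    rw [Finset.sum_eq_zero, mul_zero]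
    intro x _
    by_cases hx0 : x = 0
    · subst hx0
      rw [hf0, HR_zero, sub_self, zero_mul]
    · by_cases hxA : x ∈ A
      · rw [hcA x hxA, mul_zero]
      · rw [hgsupp x (by simp [hx0, hxA]), zero_mul]
  -- expansion
  have hexp : ∑ x ∈ T, ∑ y ∈ T, ωR ω x y * (f x - f y)^2
      = (∑ x ∈ T, ∑ y ∈ T, ωR ω x y * (HR ω A x - HR ω A y) * (HR ω A x - HR ω A y))
        + 2 * (∑ x ∈ T, ∑ y ∈ T, ωR ω x y * (HR ω A x - HR ω A y)
            * ((f x - HR ω A x) - (f y - HR ω A y)))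
        + ∑ x ∈ T, ∑ y ∈ T, ωR ω x y * ((f x - HR ω A x) - (f y - HR ω A y))^2 := by
    rw [Finset.mul_sum, ← Finset.sum_add_distrib, ← Finset.sum_add_distrib]
    refine Finset.sum_congr rfl fun x _ => ?_
    rw [Finset.mul_sum, ← Finset.sum_add_distrib, ← Finset.sum_add_distrib]
    refine Finset.sum_congr rfl fun y _ => by ring
  have hgg : 0 ≤ ∑ x ∈ T, ∑ y ∈ T, ωR ω x y * ((f x - HR ω A x) - (f y - HR ω A y))^2 :=
    Finset.sum_nonneg fun x _ => Finset.sum_nonneg fun y _ =>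
      mul_nonneg (ωR_nonneg x y) (sq_nonneg _)
  rw [hexp, hBuu, hBug, mul_zero, add_zero]
  linarith

end Dirichlet


section Boxes

def boxF (d s : ℕ) : Finset (Zd d) := Fintype.piFinset (fun _ => Finset.Icc (-(s:ℤ)) (s:ℤ))

def mN {d : ℕ} (x : Zd d) : ℕ := Finset.univ.sup (fun i => (x i).natAbs)

lemma mem_boxF {d s : ℕ} {x : Zd d} : x ∈ boxF d s ↔ mN x ≤ s := by
  rw [boxF, Fintype.mem_piFinset, mN, Finset.sup_le_iff]
  constructor
  · intro h i _
    have := h i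
    rw [Finset.mem_Icc] at this
    omega
  · intro h i
    have := h i (Finset.mem_univ i)
    rw [Finset.mem_Icc]
    omega

lemma card_boxF (d s : ℕ) : (boxF d s).card = (2*s+1)^d := by
  rw [boxF, Fintype.card_piFinset]
  have h1 : (Finset.Icc (-(s:ℤ)) (s:ℤ)).card = 2*s+1 := by
    rw [Int.card_Icc]
    omega
  simp only [h1, Finset.prod_const, Finset.card_univ, Fintype.card_fin]

lemma mN_zero {d : ℕ} : mN (0 : Zd d) = 0 := by
  rw [mN]
  refine Nat.le_antisymm (Finset.sup_le fun i _ => ?_) (Nat.zero_le _)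
  simp [Pi.zero_apply]

lemma zero_mem_boxF (d s : ℕ) : (0 : Zd d) ∈ boxF d s := by
  rw [mem_boxF, mN_zero]; exact Nat.zero_le _

lemma mN_le_of_nbr {d : ℕ} {x y : Zd d} (h : y ∈ nbr x) : mN y ≤ mN x + 1 := by
  rw [mem_nbr_iff, znorm_sub_comm, znorm_eq_one_iff] at h
  obtain ⟨i, hi | hi⟩ := h
  all_goals {
    refine Finset.sup_le fun j _ => ?_
    have hyj : y j = x j + (if j = i then 1 else 0) ∨ y j = x j - (if j = i then 1 else 0) := by
      first
      | (left
         have : y j - x j = (if j = i then 1 else 0) := by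
           have := congrFun hi j
           simpa [eunit, Pi.sub_apply] using this
         omega)
      | (right
         have : y j - x j = -(if j = i then 1 else 0) := by
           have := congrFun hi j
           simpa [eunit, Pi.sub_apply, Pi.neg_apply] using this
         omega)
    have hb : (x j).natAbs ≤ mN x := by
      rw [mN]; exact Finset.le_sup (f := fun i => (x i).natAbs) (Finset.mem_univ j)
    rcases hyj with h' | h' <;> (rw [h']; split_ifs with hji <;> omega) }

lemma nbr_subset_boxF {d s : ℕ} {x : Zd d} (hx : x ∈ boxF d s) : nbr x ⊆ boxF d (s+1) := by
  intro y hy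
  rw [mem_boxF] at hx ⊢
  exact le_trans (mN_le_of_nbr hy) (by omega)

lemma nbr_symm {d : ℕ} {x y : Zd d} (h : y ∈ nbr x) : x ∈ nbr y := by
  rw [mem_nbr_iff] at h ⊢
  rwa [znorm_sub_comm]

lemma boxF_mono {d : ℕ} {s t : ℕ} (h : s ≤ t) : boxF d s ⊆ boxF d t := by
  intro x hx
  rw [mem_boxF] at hx ⊢
  omega

lemma shell_card_le {d s : ℕ} (hd2 : d = 1 ∨ d = 2) (B : ℕ) :
    ((boxF d B).filter (fun x => mN x = s)).card ≤ 8*s + 4 := by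
  rcases Nat.eq_zero_or_pos s with hs | hs
  · subst hs
    have hsub : (boxF d B).filter (fun x => mN x = 0) ⊆ boxF d 0 := by
      intro x hx
      rw [mem_boxF]
      exact le_of_eq (Finset.mem_filter.mp hx).2
    calc _ ≤ (boxF d 0).card := Finset.card_le_card hsub
      _ = 1^d := card_boxF d 0
      _ ≤ 4 := by rw [one_pow]; omega
  · have hsub : (boxF d B).filter (fun x => mN x = s) ⊆ boxF d s \ boxF d (s-1) := by
      intro x hx
      have hm := (Finset.mem_filter.mp hx).2
      rw [Finset.mem_sdiff, mem_boxF, mem_boxF]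
      omega
    calc _ ≤ (boxF d s \ boxF d (s-1)).card := Finset.card_le_card hsub
      _ = (boxF d s).card - (boxF d (s-1)).card :=
          Finset.card_sdiff_of_subset (boxF_mono (by omega))
      _ = (2*s+1)^d - (2*(s-1)+1)^d := by rw [card_boxF, card_boxF]
      _ ≤ 8*s + 4 := by
          obtain ⟨t, rfl⟩ : ∃ t, s = t + 1 := ⟨s-1, by omega⟩
          rw [Nat.sub_le_iff_le_add]
          have ht : t + 1 - 1 = t := by omega
          rw [ht]
          rcases hd2 with h | h <;> subst h <;> nlinarith [sq_nonneg t]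

end Boxes


section TestFn

/-- real value of max 1 s -/
def Mr (s : ℕ) : ℝ := ((max 1 s : ℕ) : ℝ)

lemma Mr_pos (s : ℕ) : 0 < Mr s := by
  rw [Mr]
  exact_mod_cast Nat.lt_of_lt_of_le Nat.zero_lt_one (le_max_left 1 s)

lemma Mr_ge_one (s : ℕ) : 1 ≤ Mr s := by
  rw [Mr]; exact_mod_cast le_max_left 1 s

lemma Mr_mono {s t : ℕ} (h : s ≤ t) : Mr s ≤ Mr t := by
  rw [Mr, Mr]
  exact_mod_cast max_le_max le_rfl h

/-- the log test function with parameter R -/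
def fT (d R : ℕ) : Zd d → ℝ :=
  fun x => max 0 ((Real.log R - Real.log (Mr (mN x))) / Real.log R)

lemma log_Mr_nonneg (s : ℕ) : 0 ≤ Real.log (Mr s) := Real.log_nonneg (Mr_ge_one s)

lemma fT_zero {d R : ℕ} (hR : 3 ≤ R) : fT d R 0 = 1 := by
  rw [fT, mN_zero]
  have : Mr 0 = 1 := by rw [Mr]; norm_num
  rw [this, Real.log_one, sub_zero, div_self]
  · norm_num
  · have : (1:ℝ) < (R:ℝ) := by exact_mod_cast (by omega : 1 < R)
    exact (Real.log_pos this).ne'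

lemma fT_outside {d R : ℕ} (hR : 3 ≤ R) {x : Zd d} (hx : R ≤ mN x) : fT d R x = 0 := by
  rw [fT]
  have h1 : (R:ℝ) ≤ Mr (mN x) := by
    rw [Mr]
    exact_mod_cast le_trans hx (le_max_right 1 (mN x))
  have h2 : Real.log R ≤ Real.log (Mr (mN x)) :=
    Real.log_le_log (by positivity) h1
  have h3 : (Real.log R - Real.log (Mr (mN x))) / Real.log R ≤ 0 := by
    apply div_nonpos_of_nonpos_of_nonneg
    · linarith
    · exact Real.log_natCast_nonneg R
  exact max_eq_left h3

lemma log_step (s : ℕ) :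
    Real.log (Mr (s+1)) - Real.log (Mr s) ≤ 1 / Mr s ∧
      0 ≤ Real.log (Mr (s+1)) - Real.log (Mr s) := by
  constructor
  · rcases Nat.eq_zero_or_pos s with hs | hs
    · subst hs
      have h0 : Mr 0 = 1 := by rw [Mr]; norm_num
      have h1 : Mr 1 = 1 := by rw [Mr]; norm_num
      rw [h0, h1]
      norm_num
    · have hM : Mr s = (s:ℝ) := by
        have h' : max 1 s = s := max_eq_right hs
        rw [Mr, h']
      have hM1 : Mr (s+1) = ((s:ℝ)+1) := by
        have h' : max 1 (s+1) = s + 1 := max_eq_right (by omega)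
        rw [Mr, h']; push_cast; ring
      rw [hM, hM1, ← Real.log_div (by positivity) (by positivity)]
      have := Real.log_le_sub_one_of_pos (x := ((s:ℝ)+1)/(s:ℝ)) (by positivity)
      have hs' : (0:ℝ) < s := by exact_mod_cast hs
      calc Real.log (((s:ℝ)+1)/s) ≤ ((s:ℝ)+1)/s - 1 := this
        _ = 1/(s:ℝ) := by field_simp; ring
  · apply sub_nonneg.mpr
    exact Real.log_le_log (Mr_pos s) (Mr_mono (by omega))

lemma fT_diff_bound {d R : ℕ} (hR : 3 ≤ R) {x y : Zd d} (hy : y ∈ nbr x) :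
    (fT d R x - fT d R y)^2 ≤ (1 / (Real.log R * Mr (mN x - 1)))^2 := by
  have hLpos : 0 < Real.log R := Real.log_pos (by exact_mod_cast (by omega : 1 < R))
  have habs : |fT d R x - fT d R y|
      ≤ |Real.log (Mr (mN y)) - Real.log (Mr (mN x))| / Real.log R := by
    rw [fT, fT]
    have h1 : ∀ u v : ℝ, |max 0 u - max 0 v| ≤ |u - v| := by
      intro u v
      rw [max_comm 0 u, max_comm 0 v]
      exact abs_max_sub_max_le_abs u v 0
    refine le_trans (h1 _ _) ?_
    rw [div_sub_div_same, ← abs_of_pos hLpos, ← abs_div]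
    apply le_of_eq
    congr 1
    rw [abs_of_pos hLpos]
    ring
  have hkey : |Real.log (Mr (mN y)) - Real.log (Mr (mN x))| ≤ 1 / Mr (mN x - 1) := by
    have hxy := mN_le_of_nbr hy
    have hyx := mN_le_of_nbr (nbr_symm hy)
    -- |mN x - mN y| ≤ 1
    rcases Nat.lt_trichotomy (mN x) (mN y) with hlt | heq | hgt
    · have : mN y = mN x + 1 := by omega
      rw [this]
      rw [abs_of_nonneg (log_step (mN x)).2]
      refine le_trans (log_step (mN x)).1 ?_
      apply div_le_div_of_nonneg_left (by norm_num) (Mr_pos _) (Mr_mono (by omega))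
    · rw [heq, sub_self, abs_zero]
      exact div_nonneg zero_le_one (Mr_pos _).le
    · obtain ⟨a, hxa⟩ : ∃ a, mN x = a + 1 := ⟨mN x - 1, by omega⟩
      have hya : mN y = a := by omega
      rw [hxa, hya, Nat.add_sub_cancel, abs_sub_comm, abs_of_nonneg (log_step a).2]
      exact (log_step a).1
  have hb2 : |fT d R x - fT d R y| ≤ 1 / (Real.log R * Mr (mN x - 1)) := by
    refine le_trans habs ?_
    rw [div_le_iff₀ hLpos]
    have heq' : 1 / (Real.log R * Mr (mN x - 1)) * Real.log R = 1 / Mr (mN x - 1) := by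
      rw [mul_comm (Real.log R) (Mr (mN x - 1)), one_div, mul_inv, mul_assoc,
        inv_mul_cancel₀ hLpos.ne', mul_one, one_div]
    rw [heq']
    exact hkey
  calc (fT d R x - fT d R y)^2 = |fT d R x - fT d R y|^2 := (sq_abs _).symm
    _ ≤ (1 / (Real.log R * Mr (mN x - 1)))^2 := pow_le_pow_left₀ (abs_nonneg _) hb2 2

end TestFn


section EnergySum

def wgt (R s : ℕ) : ℝ := (1 / (Real.log R * Mr (s - 1)))^2

lemma wgt_nonneg (R s : ℕ) : 0 ≤ wgt R s := sq_nonneg _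

def DetE (d R : ℕ) : ℝ :=
  ∑ x ∈ boxF d (R+2), ∑ y ∈ boxF d (R+2),
    (if znorm (x - y) = 1 then (fT d R x - fT d R y)^2 else 0)

lemma harmonic_le (n : ℕ) :
    ∑ t ∈ Finset.range n, (1:ℝ)/(t+1) ≤ 1 + Real.log n := by
  induction n with
  | zero => simp
  | succ n ih =>
      rcases Nat.eq_zero_or_pos n with h0 | hpos
      · subst h0; simp
      · have hn' : (0:ℝ) < n := by exact_mod_cast hpos
        have hstep : (1:ℝ)/((n:ℝ)+1) ≤ Real.log ((n:ℝ)+1) - Real.log n := by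
          rw [← Real.log_div (by positivity) (by positivity)]
          have hx : (0:ℝ) < (n:ℝ)/((n:ℝ)+1) := by positivity
          have h1 := Real.log_le_sub_one_of_pos hx
          have hlog : Real.log ((n:ℝ)/((n:ℝ)+1)) = - Real.log (((n:ℝ)+1)/(n:ℝ)) := by
            rw [← Real.log_inv]
            congr 1
            field_simp
          rw [hlog] at h1
          have h2 : (n:ℝ)/((n:ℝ)+1) - 1 = -(1/((n:ℝ)+1)) := by field_simp; ring
          rw [h2] at h1
          linarith
        rw [Finset.sum_range_succ]
        push_cast
        linarith

lemma sMr (s : ℕ) : (s:ℝ)+1 ≤ 3 * Mr (s-1) := by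
  by_cases hs : s ≤ 1
  · have h1 : Mr (s-1) = 1 := by
      interval_cases s <;> (rw [Mr]; norm_num)
    rw [h1]
    have : (s:ℝ) ≤ 1 := by exact_mod_cast hs
    linarith
  · push_neg at hs
    have h' : max 1 (s-1) = s - 1 := max_eq_right (by omega)
    have h2 : Mr (s-1) = ((s:ℝ)-1) := by
      rw [Mr, h']
      push_cast [Nat.cast_sub (by omega : 1 ≤ s)]
      ring
    rw [h2]
    have : (2:ℝ) ≤ s := by exact_mod_cast hs
    linarith

variable {d : ℕ}

lemma sum_wgt_le (R : ℕ) (hd2 : d = 1 ∨ d = 2) (hR : 3 ≤ R) :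
    ∑ x ∈ boxF d (R+2), wgt R (mN x)
      ≤ 108/(Real.log R)^2 * (1 + Real.log ((R:ℝ)+3)) := by
  have hLpos : 0 < Real.log R := Real.log_pos (by exact_mod_cast (by omega : 1 < R))
  have hmaps : ∀ x ∈ boxF d (R+2), mN x ∈ Finset.range (R+3) := by
    intro x hx
    rw [Finset.mem_range]
    have := mem_boxF.mp hx
    omega
  rw [← Finset.sum_fiberwise_of_maps_to hmaps (fun x => wgt R (mN x))]
  have step1 : ∀ s ∈ Finset.range (R+3),
      ∑ x ∈ (boxF d (R+2)).filter (fun x => mN x = s), wgt R (mN x)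
        ≤ (8*(s:ℝ)+4) * wgt R s := by
    intro s _
    have hcongr : ∀ x ∈ (boxF d (R+2)).filter (fun x => mN x = s), wgt R (mN x) = wgt R s := by
      intro x hx
      rw [(Finset.mem_filter.mp hx).2]
    rw [Finset.sum_congr rfl hcongr, Finset.sum_const, nsmul_eq_mul]
    apply mul_le_mul_of_nonneg_right _ (wgt_nonneg R s)
    calc (((boxF d (R+2)).filter (fun x => mN x = s)).card : ℝ)
        ≤ ((8*s+4 : ℕ) : ℝ) := by exact_mod_cast shell_card_le hd2 (R+2)
      _ = 8*(s:ℝ)+4 := by push_cast; ring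
  refine le_trans (Finset.sum_le_sum step1) ?_
  have step2 : ∀ s ∈ Finset.range (R+3),
      (8*(s:ℝ)+4) * wgt R s ≤ 108/((Real.log R)^2 * ((s:ℝ)+1)) := by
    intro s _
    have hMr := Mr_pos (s-1)
    have hsnn : (0:ℝ) ≤ s := Nat.cast_nonneg s
    have e1 : wgt R s = 1/((Real.log R)^2 * (Mr (s-1))^2) := by
      rw [wgt, div_pow, one_pow, mul_pow]
    calc (8*(s:ℝ)+4) * wgt R s
        ≤ (36 * Mr (s-1)) * wgt R s := by
          apply mul_le_mul_of_nonneg_right _ (wgt_nonneg R s)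
          have := sMr s
          linarith
      _ = 36 / ((Real.log R)^2 * Mr (s-1)) := by
          rw [e1]
          field_simp
      _ ≤ 108/((Real.log R)^2 * ((s:ℝ)+1)) := by
          rw [div_le_div_iff₀ (by positivity) (by positivity)]
          have h3 := mul_le_mul_of_nonneg_left (sMr s)
            (by positivity : (0:ℝ) ≤ 36*(Real.log R)^2)
          nlinarith [h3]
  refine le_trans (Finset.sum_le_sum step2) ?_
  have hsum : ∑ s ∈ Finset.range (R+3), 108/((Real.log R)^2 * ((s:ℝ)+1))
      = 108/(Real.log R)^2 * ∑ s ∈ Finset.range (R+3), (1:ℝ)/((s:ℝ)+1) := by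
    rw [Finset.mul_sum]
    refine Finset.sum_congr rfl fun s _ => ?_
    rw [← div_div, div_eq_mul_one_div]
  rw [hsum]
  apply mul_le_mul_of_nonneg_left _ (by positivity)
  have := harmonic_le (R+3)
  calc ∑ s ∈ Finset.range (R+3), (1:ℝ)/((s:ℝ)+1)
      ≤ 1 + Real.log ((R+3 : ℕ) : ℝ) := by
        refine le_trans (le_of_eq ?_) (harmonic_le (R+3))
        rfl
    _ = 1 + Real.log ((R:ℝ)+3) := by push_cast; ring_nf

lemma DetE_le (R : ℕ) (hd2 : d = 1 ∨ d = 2) (hR : 3 ≤ R) :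
    DetE d R ≤ 432/(Real.log R)^2 * (1 + Real.log ((R:ℝ)+3)) := by
  have hinner : ∀ x ∈ boxF d (R+2),
      ∑ y ∈ boxF d (R+2), (if znorm (x - y) = 1 then (fT d R x - fT d R y)^2 else 0)
        ≤ 4 * wgt R (mN x) := by
    intro x _
    have hbd : ∀ y ∈ boxF d (R+2),
        (if znorm (x - y) = 1 then (fT d R x - fT d R y)^2 else 0)
          ≤ (if znorm (x - y) = 1 then wgt R (mN x) else 0) := by
      intro y _
      split_ifs with h
      · have hy : y ∈ nbr x := mem_nbr_iff.mpr h
        exact fT_diff_bound hR hy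
      · exact le_rfl
    refine le_trans (Finset.sum_le_sum hbd) ?_
    rw [← Finset.sum_filter]
    have hsub : (boxF d (R+2)).filter (fun y => znorm (x - y) = 1) ⊆ nbr x := by
      intro y hy
      exact mem_nbr_iff.mpr (Finset.mem_filter.mp hy).2
    calc ∑ _y ∈ (boxF d (R+2)).filter (fun y => znorm (x - y) = 1), wgt R (mN x)
        ≤ ∑ _y ∈ nbr x, wgt R (mN x) :=
          Finset.sum_le_sum_of_subset_of_nonneg hsub (fun _ _ _ => wgt_nonneg R (mN x))
      _ = (nbr x).card * wgt R (mN x) := by rw [Finset.sum_const, nsmul_eq_mul]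
      _ ≤ 4 * wgt R (mN x) := by
          apply mul_le_mul_of_nonneg_right _ (wgt_nonneg R (mN x))
          have h1 := card_nbr_le x
          have h2 : 2 * d ≤ 4 := by rcases hd2 with h | h <;> omega
          exact_mod_cast le_trans h1 h2
  calc DetE d R ≤ ∑ x ∈ boxF d (R+2), 4 * wgt R (mN x) := Finset.sum_le_sum hinner
    _ = 4 * ∑ x ∈ boxF d (R+2), wgt R (mN x) := by rw [Finset.mul_sum]
    _ ≤ 4 * (108/(Real.log R)^2 * (1 + Real.log ((R:ℝ)+3))) := by
        apply mul_le_mul_of_nonneg_left (sum_wgt_le R hd2 hR) (by norm_num)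
    _ = 432/(Real.log R)^2 * (1 + Real.log ((R:ℝ)+3)) := by ring

lemma exists_good_R (hd2 : d = 1 ∨ d = 2) (δ : ℝ) (hδ : 0 < δ) :
    ∃ R : ℕ, 3 ≤ R ∧ DetE d R < δ := by
  refine ⟨max 3 ⌈Real.exp (1297/δ)⌉₊, le_max_left _ _, ?_⟩
  set R := max 3 ⌈Real.exp (1297/δ)⌉₊ with hRdef
  have hR3 : 3 ≤ R := le_max_left _ _
  have hRe : Real.exp (1297/δ) ≤ (R:ℝ) := by
    calc Real.exp (1297/δ) ≤ (⌈Real.exp (1297/δ)⌉₊ : ℝ) := Nat.le_ceil _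
      _ ≤ (R:ℝ) := by exact_mod_cast le_max_right _ _
  have hL : 1297/δ ≤ Real.log R := by
    rw [← Real.log_exp (1297/δ)]
    exact Real.log_le_log (Real.exp_pos _) hRe
  have hLpos : 0 < Real.log R := lt_of_lt_of_le (by positivity) hL
  have hL1 : 1 < Real.log R := by
    have h3 : (3:ℝ) ≤ (R:ℝ) := by exact_mod_cast hR3
    have : Real.log 3 ≤ Real.log R := Real.log_le_log (by norm_num) h3
    have hlog3 : 1 < Real.log 3 := by
      rw [← Real.log_exp 1]
      apply Real.log_lt_log (Real.exp_pos 1)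
      calc Real.exp 1 < 2.7182818286 := Real.exp_one_lt_d9
        _ < 3 := by norm_num
    linarith
  have hmain := DetE_le R hd2 hR3
  have hlogR3 : Real.log ((R:ℝ)+3) ≤ 1 + Real.log R := by
    have h1 : (R:ℝ)+3 ≤ 2*(R:ℝ) := by
      have : (3:ℝ) ≤ (R:ℝ) := by exact_mod_cast hR3
      linarith
    calc Real.log ((R:ℝ)+3) ≤ Real.log (2*(R:ℝ)) :=
          Real.log_le_log (by positivity) h1
      _ = Real.log 2 + Real.log R := Real.log_mul (by norm_num)
          (by positivity : (0:ℝ) < (R:ℝ)).ne'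
      _ ≤ 1 + Real.log R := by
          have h2e : (2:ℝ) < Real.exp 1 := by
            calc (2:ℝ) < 2.7182818283 := by norm_num
              _ < Real.exp 1 := Real.exp_one_gt_d9
          have : Real.log 2 ≤ 1 := by
            rw [← Real.log_exp 1]
            exact Real.log_le_log (by norm_num) h2e.le
          linarith
  have hbound : DetE d R ≤ 1296/Real.log R := by
    calc DetE d R ≤ 432/(Real.log R)^2 * (1 + Real.log ((R:ℝ)+3)) := hmain
      _ ≤ 432/(Real.log R)^2 * (3 * Real.log R) := by
          apply mul_le_mul_of_nonneg_left _ (by positivity)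
          linarith
      _ = 1296/Real.log R := by
          field_simp
          ring
  calc DetE d R ≤ 1296/Real.log R := hbound
    _ ≤ 1296/(1297/δ) := by
        apply div_le_div_of_nonneg_left (by norm_num) (by positivity) hL
    _ = 1296*δ/1297 := by field_simp
    _ < δ := by linarith

end EnergySum


section Master
variable {d : ℕ}

/-- ℝ≥0∞-valued energy of the test function `fT d R` in environment ω -/
def EgyE (ω : EnvC d) (R : ℕ) : ℝ≥0∞ :=
  ∑ x ∈ boxF d (R+2), ∑ y ∈ boxF d (R+2),
    (ω (x, y) : ℝ≥0∞) * ENNReal.ofReal ((fT d R x - fT d R y)^2)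

lemma EgyE_toReal (ω : EnvC d) (R : ℕ) :
    (EgyE ω R).toReal
      = ∑ x ∈ boxF d (R+2), ∑ y ∈ boxF d (R+2), ωR ω x y * (fT d R x - fT d R y)^2 := by
  rw [EgyE, ENNReal.toReal_sum (fun x _ => ?hx)]
  case hx =>
    exact (ENNReal.sum_lt_top.mpr fun y _ =>
      ENNReal.mul_lt_top ENNReal.coe_lt_top ENNReal.ofReal_lt_top).ne
  refine Finset.sum_congr rfl fun x _ => ?_
  rw [ENNReal.toReal_sum (fun y _ =>
    ENNReal.mul_ne_top ENNReal.coe_ne_top ENNReal.ofReal_ne_top)]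
  refine Finset.sum_congr rfl fun y _ => ?_
  rw [ENNReal.toReal_mul, ENNReal.toReal_ofReal (sq_nonneg _)]
  rfl

lemma master {ω : EnvC d} (hω : IsCondEnv ω) (hd2 : d = 1 ∨ d = 2)
    (hE : ∀ δ : ℝ, 0 < δ → ∃ R : ℕ, 3 ≤ R ∧ EgyE ω R < ENNReal.ofReal δ) :
    returnProb ω = 1 := by
  have hd : 0 < d := by rcases hd2 with h | h <;> omega
  have hle := returnProb_le_one hω hd
  refine le_antisymm hle ?_
  by_contra hlt
  push_neg at hlt
  have htne : returnProb ω ≠ ⊤ := (lt_of_le_of_lt hle ENNReal.one_lt_top).ne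
  have htr1 : (returnProb ω).toReal < 1 := by
    rw [show (1:ℝ) = (1:ℝ≥0∞).toReal by simp]
    exact ENNReal.toReal_strict_mono ENNReal.one_ne_top hlt
  have htr0 : 0 ≤ (returnProb ω).toReal := ENNReal.toReal_nonneg
  set δ' : ℝ := (1 - (returnProb ω).toReal)/2 with hδ'
  have hδ'pos : 0 < δ' := by rw [hδ']; linarith
  have hπ0 : 0 < πF ω 0 := πF_pos hω hd 0
  obtain ⟨R, hR3, hEgy⟩ := hE (δ' * (2 * πF ω 0)) (by positivity)
  set A : Finset (Zd d) := (boxF d (R+1)).erase 0 with hA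
  have h0A : (0 : Zd d) ∉ A := Finset.notMem_erase _ _
  have h0T : (0 : Zd d) ∈ boxF d (R+2) := zero_mem_boxF d (R+2)
  have hclos : ∀ x ∈ insert (0 : Zd d) A, nbr x ⊆ boxF d (R+2) := by
    intro x hx
    have hx1 : x ∈ boxF d (R+1) := by
      rcases Finset.mem_insert.mp hx with h | h
      · rw [h]; exact zero_mem_boxF d (R+1)
      · exact Finset.mem_of_mem_erase h
    exact nbr_subset_boxF hx1
  have hf0 : fT d R 0 = 1 := fT_zero hR3
  have hfsupp : ∀ x, x ∉ insert (0 : Zd d) A → fT d R x = 0 := by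
    intro x hx
    rw [Finset.mem_insert] at hx
    push_neg at hx
    apply fT_outside hR3
    by_contra hc
    push_neg at hc
    have : x ∈ boxF d (R+1) := mem_boxF.mpr (by omega)
    exact hx.2 (Finset.mem_erase.mpr ⟨hx.1, this⟩)
  have hdir := dirichlet_bound hω hd h0A h0T hclos (fT d R) hf0 hfsupp
  have hEgyR : (EgyE ω R).toReal < δ' * (2 * πF ω 0) := by
    have h1 : (EgyE ω R).toReal < (ENNReal.ofReal (δ' * (2 * πF ω 0))).toReal := by
      apply ENNReal.toReal_strict_mono ENNReal.ofReal_ne_top hEgy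
    rwa [ENNReal.toReal_ofReal (by positivity)] at h1
  rw [EgyE_toReal] at hEgyR
  -- so 1 - hR0 < δ'
  have hstep : 1 - hR ω A 0 < δ' := by
    have := lt_of_le_of_lt hdir hEgyR
    nlinarith
  -- returnProb ≥ ofReal (hR0) ≥ ofReal (1 - δ')
  have hlow : ENNReal.ofReal (1 - δ') ≤ returnProb ω := by
    calc ENNReal.ofReal (1 - δ') ≤ ENNReal.ofReal (hR ω A 0) :=
          ENNReal.ofReal_le_ofReal (by linarith)
      _ = hitf ω A 0 := ENNReal.ofReal_toReal (hitf_ne_top hω hd h0A 0)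
      _ ≤ returnProb ω := returnProb_ge_hitf h0A
  have := (ENNReal.ofReal_le_iff_le_toReal htne).mp hlow
  rw [hδ'] at this
  linarith [hδ'pos]

end Master


section Glue
variable {d : ℕ}

lemma EgyE_measurable (R : ℕ) : Measurable (fun ω : EnvC d => EgyE ω R) := by
  apply Finset.measurable_sum
  intro x _
  apply Finset.measurable_sum
  intro y _
  exact ((measurable_pi_apply (x, y)).coe_nnreal_ennreal).mul_const _

lemma lintegral_EgyE_le {P : Measure (EnvC d)} [IsProbabilityMeasure P]
    (hcond : ∀ᵐ ω ∂P, IsCondEnv ω) {C : ℝ≥0∞}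
    (hbound : ∀ x y : Zd d, znorm (x - y) = 1 → ∫⁻ ω, (ω (x, y) : ℝ≥0∞) ∂P ≤ C)
    (R : ℕ) :
    ∫⁻ ω, EgyE ω R ∂P ≤ C * ENNReal.ofReal (DetE d R) := by
  have hmeas : ∀ x y : Zd d, Measurable (fun ω : EnvC d => (ω (x, y) : ℝ≥0∞)) :=
    fun x y => (measurable_pi_apply (x, y)).coe_nnreal_ennreal
  have h1 : ∫⁻ ω, EgyE ω R ∂P
      = ∑ x ∈ boxF d (R+2), ∑ y ∈ boxF d (R+2),
        (∫⁻ ω, (ω (x, y) : ℝ≥0∞) ∂P) * ENNReal.ofReal ((fT d R x - fT d R y)^2) := by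
    simp only [EgyE]
    rw [lintegral_finset_sum _ (fun x _ => Finset.measurable_sum _
      (fun y _ => ((hmeas x y).mul_const _)))]
    refine Finset.sum_congr rfl fun x _ => ?_
    rw [lintegral_finset_sum _ (fun y _ => (hmeas x y).mul_const _)]
    exact Finset.sum_congr rfl fun y _ => lintegral_mul_const _ (hmeas x y)
  rw [h1]
  have h2 : ∀ x y : Zd d, (∫⁻ ω, (ω (x, y) : ℝ≥0∞) ∂P)
        * ENNReal.ofReal ((fT d R x - fT d R y)^2)
      ≤ C * (if znorm (x - y) = 1 then ENNReal.ofReal ((fT d R x - fT d R y)^2) else 0) := by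
    intro x y
    split_ifs with h
    · exact mul_le_mul_left (hbound x y h) _
    · have hzero : ∫⁻ ω, (ω (x, y) : ℝ≥0∞) ∂P = 0 := by
        rw [← lintegral_zero (μ := P)]
        apply lintegral_congr_ae
        filter_upwards [hcond] with ω hωc
        rw [(hωc x y).2 h]
        simp
      rw [hzero, zero_mul, mul_zero]
  calc ∑ x ∈ boxF d (R+2), ∑ y ∈ boxF d (R+2),
        (∫⁻ ω, (ω (x, y) : ℝ≥0∞) ∂P) * ENNReal.ofReal ((fT d R x - fT d R y)^2)
      ≤ ∑ x ∈ boxF d (R+2), ∑ y ∈ boxF d (R+2),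
        C * (if znorm (x - y) = 1 then ENNReal.ofReal ((fT d R x - fT d R y)^2) else 0) :=
        Finset.sum_le_sum fun x _ => Finset.sum_le_sum fun y _ => h2 x y
    _ = C * ENNReal.ofReal (DetE d R) := by
        rw [DetE, ENNReal.ofReal_sum_of_nonneg (fun x _ => Finset.sum_nonneg
          (fun y _ => by positivity)), Finset.mul_sum]
        refine Finset.sum_congr rfl fun x _ => ?_
        rw [ENNReal.ofReal_sum_of_nonneg (fun y _ => by positivity), Finset.mul_sum]
        refine Finset.sum_congr rfl fun y _ => ?_
        split_ifs with h
        · rfl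
        · rw [ENNReal.ofReal_zero, mul_zero]

end Glue

end RecAux


open RecAux

theorem stmt4 (d : ℕ) (hd : d = 1 ∨ d = 2) (P : Measure (EnvC d)) [IsProbabilityMeasure P]
    (hcond : ∀ᵐ ω ∂P, IsCondEnv ω)
    (hsup : ∃ C : ℝ≥0∞, C < ∞ ∧ ∀ x y : Zd d, znorm (x - y) = 1 →
      ∫⁻ ω, (ω (x, y) : ℝ≥0∞) ∂P ≤ C) :
    ∀ᵐ ω ∂P, returnProb ω = 1 := by
  obtain ⟨C, hC, hbound⟩ := hsup
  -- choose a sequence of radii with geometrically small deterministic energy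
  have hch : ∀ k : ℕ, ∃ R : ℕ, 3 ≤ R ∧ DetE d R < (1/2:ℝ)^k :=
    fun k => exists_good_R hd _ (by positivity)
  choose Rk hRk3 hRkE using hch
  set G : EnvC d → ℝ≥0∞ := fun ω => ∑' k : ℕ, EgyE ω (Rk k) with hG
  have hGmeas : Measurable G := Measurable.ennreal_tsum (fun k => EgyE_measurable (Rk k))
  have hGint : ∫⁻ ω, G ω ∂P < ⊤ := by
    rw [hG]
    simp only
    rw [lintegral_tsum (fun k => (EgyE_measurable (Rk k)).aemeasurable)]
    have hterm : ∀ k : ℕ, ∫⁻ ω, EgyE ω (Rk k) ∂P ≤ C * ENNReal.ofReal ((1/2:ℝ)^k) := by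
      intro k
      refine le_trans (lintegral_EgyE_le hcond hbound (Rk k)) ?_
      exact mul_le_mul_right (ENNReal.ofReal_le_ofReal (hRkE k).le) _
    calc ∑' k : ℕ, ∫⁻ ω, EgyE ω (Rk k) ∂P
        ≤ ∑' k : ℕ, C * ENNReal.ofReal ((1/2:ℝ)^k) :=
          Summable.tsum_le_tsum hterm ENNReal.summable ENNReal.summable
      _ = C * ∑' k : ℕ, ENNReal.ofReal ((1/2:ℝ)^k) := ENNReal.tsum_mul_left
      _ = C * ∑' k : ℕ, (ENNReal.ofReal (1/2:ℝ))^k := by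
          congr 1
          exact tsum_congr fun k => ENNReal.ofReal_pow (by norm_num) k
      _ = C * (1 - ENNReal.ofReal (1/2:ℝ))⁻¹ := by rw [ENNReal.tsum_geometric]
      _ < ⊤ := by
          apply ENNReal.mul_lt_top hC
          rw [lt_top_iff_ne_top]
          apply ENNReal.inv_ne_top.mpr
          intro hzero
          have h12 : ENNReal.ofReal (1/2:ℝ) < 1 := by
            rw [ENNReal.ofReal_lt_one]
            norm_num
          have := tsub_pos_of_lt h12
          rw [hzero] at this
          exact absurd this (lt_irrefl 0)
  have hae := ae_lt_top hGmeas hGint.ne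
  filter_upwards [hcond, hae] with ω hωc hGω
  apply master hωc hd
  intro δ hδ
  by_contra hc
  push_neg at hc
  have hterm : ∀ k : ℕ, ENNReal.ofReal δ ≤ EgyE ω (Rk k) := by
    intro k
    exact hc (Rk k) (hRk3 k)
  have : (⊤ : ℝ≥0∞) ≤ G ω := by
    calc (⊤ : ℝ≥0∞) = ∑' _k : ℕ, ENNReal.ofReal δ :=
          (ENNReal.tsum_const_eq_top_of_ne_zero (by
            simp only [ne_eq, ENNReal.ofReal_eq_zero, not_le]
            exact hδ)).symm
      _ ≤ ∑' k : ℕ, EgyE ω (Rk k) := Summable.tsum_le_tsum hterm ENNReal.summable ENNReal.summable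
      _ = G ω := rfl
  exact absurd (lt_of_le_of_lt this hGω) (lt_irrefl ⊤)
end
end
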